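/- arXiv:2104.01763 — 6 statements merged into one kernel-verified Lean document; each statement's English description precedes it below -/
import Mathlib

section
/- Let F be a nonempty closed convex set of density matrices on ℂ^n and let ρ be a density matrix on ℂ^n. Then ρ ∉ F if and only if there exist a parameter estimation task, i.e. a differentiable family (Φ_θ)_{θ∈J} of CPTP maps on n×n complex matrices indexed by an interval J ⊆ ℝ together with a POVM M = (M_i)_{i∈ι}, a parameter value θ0 ∈ J, and a constant c ∈ ℝ such that the classical Fisher information satisfies F_C(σ | Φ, M)(θ0) ≤ c for every σ ∈ F while F_C(ρ | Φ, M)(θ0) > c. -/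
open Matrix
open scoped Kronecker BigOperators ComplexOrder ENNReal EReal

noncomputable section

/-- A density matrix on `ℂ^n`: positive semidefinite with unit trace. -/
def IsDensityMatrix {n : ℕ} (ρ : Matrix (Fin n) (Fin n) ℂ) : Prop :=
  ρ.PosSemidef ∧ ρ.trace = 1

/-- The Choi matrix `∑ i j, E_ij ⊗ Λ(E_ij)` of a linear map on matrices. -/
def choiMatrix {n m : ℕ}
    (Λ : Matrix (Fin n) (Fin n) ℂ →ₗ[ℂ] Matrix (Fin m) (Fin m) ℂ) :
    Matrix (Fin n × Fin m) (Fin n × Fin m) ℂ :=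
  ∑ i : Fin n, ∑ j : Fin n,
    (Matrix.single i j (1 : ℂ)) ⊗ₖ (Λ (Matrix.single i j (1 : ℂ)))

/-- A CPTP map: trace preserving and completely positive (PSD Choi matrix). -/
def IsCPTP {n m : ℕ}
    (Λ : Matrix (Fin n) (Fin n) ℂ →ₗ[ℂ] Matrix (Fin m) (Fin m) ℂ) : Prop :=
  (∀ A, (Λ A).trace = A.trace) ∧ (choiMatrix Λ).PosSemidef

/-- A POVM: a finite family of PSD matrices summing to the identity. -/
def IsPOVM {m : ℕ} {ι : Type} [Fintype ι] (M : ι → Matrix (Fin m) (Fin m) ℂ) : Prop :=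
  (∀ i, (M i).PosSemidef) ∧ (∑ i, M i) = 1

/-- Outcome probability `P_i^τ(θ) = Re Tr(Φ_θ(τ) M_i)`. -/
def outcomeProb {n m : ℕ} {ι : Type}
    (Φ : ℝ → (Matrix (Fin n) (Fin n) ℂ →ₗ[ℂ] Matrix (Fin m) (Fin m) ℂ))
    (M : ι → Matrix (Fin m) (Fin m) ℂ)
    (τ : Matrix (Fin n) (Fin n) ℂ) (i : ι) (θ : ℝ) : ℝ :=
  ((Φ θ τ * M i).trace).re

/-- Classical Fisher information at `θ0` of the outcome statistics, with one-sided
derivatives taken within the parameter interval `J`. -/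
def classicalFisher {n m : ℕ} {ι : Type} [Fintype ι] (J : Set ℝ)
    (Φ : ℝ → (Matrix (Fin n) (Fin n) ℂ →ₗ[ℂ] Matrix (Fin m) (Fin m) ℂ))
    (M : ι → Matrix (Fin m) (Fin m) ℂ)
    (τ : Matrix (Fin n) (Fin n) ℂ) (θ0 : ℝ) : ℝ :=
  ∑ i : ι,
    if 0 < outcomeProb Φ M τ i θ0 then
      (derivWithin (outcomeProb Φ M τ i) J θ0) ^ 2 / outcomeProb Φ M τ i θ0
    else 0

/-- A parameter estimation task: a differentiable family of CPTP maps indexed by an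
interval `J ⊆ ℝ` together with a POVM. -/
def IsEstimationTask {n m : ℕ} {ι : Type} [Fintype ι] (J : Set ℝ)
    (Φ : ℝ → (Matrix (Fin n) (Fin n) ℂ →ₗ[ℂ] Matrix (Fin m) (Fin m) ℂ))
    (M : ι → Matrix (Fin m) (Fin m) ℂ) : Prop :=
  J.OrdConnected ∧ (∀ θ ∈ J, IsCPTP (Φ θ)) ∧ IsPOVM M ∧
    ∀ τ, IsDensityMatrix τ → ∀ i, DifferentiableOn ℝ (outcomeProb Φ M τ i) J

/-! ### Auxiliary lemmas -/

section Aux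

lemma psd_diag_nonneg {m : ℕ} {M : Matrix (Fin m) (Fin m) ℂ} (hM : M.PosSemidef) (i : Fin m) :
    0 ≤ M i i := by
  exact hM.diag_nonneg

lemma trace_mul_psd_re_nonneg {m : ℕ} {τ N : Matrix (Fin m) (Fin m) ℂ}
    (hτ : τ.PosSemidef) (hN : N.PosSemidef) : 0 ≤ ((τ * N).trace).re := by
  obtain ⟨B, rfl⟩ : ∃ B : Matrix (Fin m) (Fin m) ℂ, N = Bᴴ * B := by
    open scoped MatrixOrder in exact CStarAlgebra.nonneg_iff_eq_star_mul_self.mp hN.nonneg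
  have h1 : (τ * (Bᴴ * B)).trace = (B * τ * Bᴴ).trace := by
    rw [← Matrix.mul_assoc, Matrix.trace_mul_cycle]
  have h2 : (B * τ * Bᴴ).PosSemidef := hτ.mul_mul_conjTranspose_same B
  have h3 : 0 ≤ (B * τ * Bᴴ).trace :=
    Finset.sum_nonneg fun i _ => psd_diag_nonneg h2 i
  rw [h1]
  exact (Complex.le_def.mp h3).1

lemma psd_real_smul {m : Type} [Fintype m] {M : Matrix m m ℂ} (hM : M.PosSemidef)
    {c : ℝ} (hc : 0 ≤ c) : ((c : ℂ) • M).PosSemidef := by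
  rw [Matrix.posSemidef_iff_dotProduct_mulVec]
  constructor
  · unfold Matrix.IsHermitian
    rw [Matrix.conjTranspose_smul, hM.1]
    congr 1
    simp [Complex.ext_iff]
  · intro x
    rw [Matrix.smul_mulVec, dotProduct_smul]
    have h0 : (0:ℂ) ≤ (c:ℂ) := by
      rw [Complex.le_def]; simp [hc]
    calc (0:ℂ) = (c:ℂ) * 0 := by ring
    _ ≤ (c:ℂ) * (star x ⬝ᵥ M *ᵥ x) := mul_le_mul_of_nonneg_left (hM.dotProduct_mulVec_nonneg x) h0
    _ = (c:ℂ) • (star x ⬝ᵥ M *ᵥ x) := by simp [smul_eq_mul]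

lemma psd_shift {m : ℕ} {A : Matrix (Fin m) (Fin m) ℂ} (hA : A.IsHermitian)
    {c s : ℝ} (h : |s| * (∑ i, ∑ j, ‖A i j‖) ≤ c) :
    ((c : ℂ) • (1 : Matrix (Fin m) (Fin m) ℂ) + (s : ℂ) • A).PosSemidef := by
  set K : ℝ := ∑ i, ∑ j, ‖A i j‖ with hKdef
  have hK : (0:ℝ) ≤ K :=
    Finset.sum_nonneg fun i _ => Finset.sum_nonneg fun j _ => norm_nonneg _
  have hc : 0 ≤ c := le_trans (by positivity) h
  have hconj : ∀ i j, star (A i j) = A j i := fun i j => by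
    conv_rhs => rw [← hA]
    simp [Matrix.conjTranspose_apply]
  rw [Matrix.posSemidef_iff_dotProduct_mulVec]
  constructor
  · unfold Matrix.IsHermitian
    rw [Matrix.conjTranspose_add, Matrix.conjTranspose_smul, Matrix.conjTranspose_smul,
      Matrix.conjTranspose_one, hA]
    congr 2 <;> simp [Complex.ext_iff]
  · intro x
    rw [Matrix.add_mulVec, dotProduct_add, Matrix.smul_mulVec,
      Matrix.smul_mulVec, dotProduct_smul, dotProduct_smul,
      Matrix.one_mulVec]
    set S : ℝ := ∑ i, Complex.normSq (x i) with hS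
    have hSnn : 0 ≤ S := Finset.sum_nonneg fun i _ => Complex.normSq_nonneg _
    have hxx : star x ⬝ᵥ x = (S : ℂ) := by
      rw [hS]
      push_cast
      simp [dotProduct, Complex.normSq_eq_conj_mul_self]
    set z : ℂ := star x ⬝ᵥ A *ᵥ x with hz
    have hform : z = ∑ i, ∑ j, star (x i) * A i j * x j := by
      simp [hz, dotProduct, Matrix.mulVec, Finset.mul_sum, mul_assoc]
    have hzstar : star z = z := by
      calc star z = ∑ i, ∑ j, star (x j) * A j i * x i := by
            rw [hform, star_sum]
            refine Finset.sum_congr rfl fun i _ => ?_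
            rw [star_sum]
            refine Finset.sum_congr rfl fun j _ => ?_
            simp only [StarMul.star_mul, star_star, hconj]
            ring
      _ = z := by
            rw [hform]
            conv_lhs => rw [Finset.sum_comm]
    have hzre : z = ((z.re : ℝ) : ℂ) := by
      have h' : (starRingEnd ℂ) z = z := hzstar
      exact (Complex.conj_eq_iff_re.mp h').symm
    have habs : ‖z‖ ≤ K * S := by
      rw [hform]
      calc ‖∑ i, ∑ j, star (x i) * A i j * x j‖
          ≤ ∑ i, ∑ j, ‖star (x i) * A i j * x j‖ :=
            le_trans (norm_sum_le _ _) (Finset.sum_le_sum fun i _ => norm_sum_le _ _)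
      _ ≤ ∑ i, ∑ j, ‖A i j‖ * S := by
            refine Finset.sum_le_sum fun i _ => Finset.sum_le_sum fun j _ => ?_
            rw [norm_mul, norm_mul, Complex.star_def, Complex.norm_conj]
            have h1 : Complex.normSq (x i) ≤ S :=
              Finset.single_le_sum (f := fun k => Complex.normSq (x k))
                (fun k _ => Complex.normSq_nonneg _) (Finset.mem_univ i)
            have h2 : Complex.normSq (x j) ≤ S :=
              Finset.single_le_sum (f := fun k => Complex.normSq (x k))
                (fun k _ => Complex.normSq_nonneg _) (Finset.mem_univ j)
            have e1 : ‖x i‖ * ‖x i‖ = Complex.normSq (x i) := by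
              rw [← Complex.sq_norm]; ring
            have e2 : ‖x j‖ * ‖x j‖ = Complex.normSq (x j) := by
              rw [← Complex.sq_norm]; ring
            have := norm_nonneg (x i)
            have := norm_nonneg (x j)
            have := norm_nonneg (A i j)
            have amgm : ‖x i‖ * ‖x j‖ ≤ S := by
              nlinarith [sq_nonneg (‖x i‖ - ‖x j‖)]
            nlinarith
      _ = K * S := by
            rw [hKdef, Finset.sum_mul]
            exact Finset.sum_congr rfl fun i _ => by rw [Finset.sum_mul]
    have hzre_bound : |z.re| ≤ K * S := le_trans (Complex.abs_re_le_norm z) habs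
    rw [hxx, hzre]
    have hmain : (c:ℂ) • ((S:ℝ):ℂ) + (s:ℂ) • ((z.re : ℝ):ℂ) = (((c * S + s * z.re : ℝ)):ℂ) := by
      simp only [smul_eq_mul]
      push_cast
      ring
    rw [hmain, Complex.le_def]
    refine ⟨?_, by simp⟩
    simp only [Complex.ofReal_re, Complex.zero_re]
    rcases abs_le.mp hzre_bound with ⟨hb1, hb2⟩
    rcases le_or_gt 0 s with hs | hs
    · rw [abs_of_nonneg hs] at h; nlinarith
    · rw [abs_of_neg hs] at h; nlinarith

lemma repr_exists {n : ℕ} (f : Matrix (Fin n) (Fin n) ℂ →L[ℝ] ℝ) :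
    ∃ A : Matrix (Fin n) (Fin n) ℂ, A.IsHermitian ∧
      ∀ τ : Matrix (Fin n) (Fin n) ℂ, τ.IsHermitian → ((A * τ).trace).re = f τ := by
  classical
  set A₀ : Matrix (Fin n) (Fin n) ℂ := Matrix.of fun i j =>
    ((f (Matrix.single j i 1) : ℂ) -
      Complex.I * (f (Complex.I • Matrix.single j i 1) : ℂ)) with hA₀
  have key : ∀ τ : Matrix (Fin n) (Fin n) ℂ, ((A₀ * τ).trace).re = f τ := by
    intro τ
    have hdecomp : τ = ∑ i : Fin n, ∑ j : Fin n,
        ((τ i j).re • Matrix.single i j (1:ℂ) +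
         (τ i j).im • (Complex.I • Matrix.single i j (1:ℂ))) := by
      ext a b
      simp only [Finset.sum_apply, Matrix.sum_apply, Matrix.add_apply, Matrix.smul_apply,
        Matrix.single, Matrix.of_apply, smul_ite, smul_zero, smul_eq_mul]
      rw [Finset.sum_eq_single a, Finset.sum_eq_single b]
      · simp [Complex.real_smul, Complex.ext_iff]
      · intro c _ hc; simp [Ne.symm hc, hc]
      · intro hb; exact absurd (Finset.mem_univ b) hb
      · intro c _ hc
        rw [Finset.sum_eq_zero]
        intro d _
        simp [Ne.symm hc, hc]
      · intro ha; exact absurd (Finset.mem_univ a) ha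
    have hrhs : (f τ : ℝ) = ∑ i : Fin n, ∑ j : Fin n,
        ((τ i j).re * f (Matrix.single i j 1) +
         (τ i j).im * f (Complex.I • Matrix.single i j 1)) := by
      conv_lhs => rw [hdecomp]
      rw [map_sum]
      refine Finset.sum_congr rfl fun i _ => ?_
      rw [map_sum]
      refine Finset.sum_congr rfl fun j _ => ?_
      rw [map_add, f.map_smul, f.map_smul]
      simp [smul_eq_mul]
    have hlhs : ((A₀ * τ).trace).re = ∑ i : Fin n, ∑ j : Fin n,
        ((τ j i).re * f (Matrix.single j i 1) +
         (τ j i).im * f (Complex.I • Matrix.single j i 1)) := by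
      rw [Matrix.trace, Complex.re_sum]
      refine Finset.sum_congr rfl fun i _ => ?_
      rw [Matrix.diag_apply, Matrix.mul_apply, Complex.re_sum]
      refine Finset.sum_congr rfl fun j _ => ?_
      rw [hA₀]
      simp only [Matrix.of_apply]
      set a : ℝ := f (Matrix.single j i 1)
      set b : ℝ := f (Complex.I • Matrix.single j i 1)
      simp [Complex.ext_iff, Complex.mul_re, Complex.mul_im]
      ring
    rw [hlhs, hrhs]
    rw [Finset.sum_comm]
  refine ⟨(2:ℂ)⁻¹ • (A₀ + A₀ᴴ), ?_, ?_⟩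
  · unfold Matrix.IsHermitian
    rw [Matrix.conjTranspose_smul, Matrix.conjTranspose_add, Matrix.conjTranspose_conjTranspose]
    rw [add_comm A₀ᴴ A₀]
    congr 1
    simp [Complex.ext_iff]
  · intro τ hτ
    have h1 : (A₀ᴴ * τ).trace = star ((A₀ * τ).trace) := by
      calc (A₀ᴴ * τ).trace = (A₀ᴴ * τᴴ).trace := by rw [hτ]
      _ = ((τ * A₀)ᴴ).trace := by rw [Matrix.conjTranspose_mul]
      _ = star ((τ * A₀).trace) := Matrix.trace_conjTranspose _
      _ = star ((A₀ * τ).trace) := by rw [Matrix.trace_mul_comm]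
    have h2 : ((2:ℂ)⁻¹ • (A₀ + A₀ᴴ)) * τ = (2:ℂ)⁻¹ • (A₀ * τ + A₀ᴴ * τ) := by
      rw [Matrix.smul_mul, Matrix.add_mul]
    rw [h2, Matrix.trace_smul, Matrix.trace_add, h1]
    set w : ℂ := (A₀ * τ).trace
    have hww : ((2:ℂ)⁻¹ • (w + star w)).re = w.re := by
      simp [smul_eq_mul, Complex.add_re, Complex.mul_re, Complex.star_def]
      ring
    rw [hww]
    exact key τ

lemma one_kron_psd {n : ℕ} {S : Matrix (Fin n) (Fin n) ℂ} (hS : S.PosSemidef) :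
    ((1 : Matrix (Fin n) (Fin n) ℂ) ⊗ₖ S).PosSemidef := by
  rw [Matrix.posSemidef_iff_dotProduct_mulVec]
  constructor
  · unfold Matrix.IsHermitian
    ext ⟨a, b⟩ ⟨c, d⟩
    have hSs : star (S d b) = S b d := by
      rw [show star (S d b) = Sᴴ b d from rfl, hS.1]
    simp only [Matrix.conjTranspose_apply, Matrix.kroneckerMap_apply, Matrix.one_apply,
      star_mul', hSs]
    by_cases h : a = c
    · subst h; simp
    · simp only [if_neg h]
      rw [if_neg (fun hh : c = a => h hh.symm), star_zero, zero_mul]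
  · intro x
    have expand : star x ⬝ᵥ ((1 : Matrix (Fin n) (Fin n) ℂ) ⊗ₖ S) *ᵥ x =
        ∑ a : Fin n, (star (fun b => x (a, b)) ⬝ᵥ S *ᵥ (fun b => x (a, b))) := by
      simp only [dotProduct, Matrix.mulVec, Fintype.sum_prod_type,
        Matrix.kroneckerMap_apply, Matrix.one_apply, Pi.star_apply]
      refine Finset.sum_congr rfl fun a _ => Finset.sum_congr rfl fun b _ => ?_
      rw [Finset.sum_eq_single a]
      · simp [Finset.mul_sum]
      · intro c _ hc; simp [Ne.symm hc, hc]
      · intro h; exact absurd (Finset.mem_univ a) h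
    rw [expand]
    exact Finset.sum_nonneg fun a _ => hS.dotProduct_mulVec_nonneg _

lemma maxent_psd {n : ℕ} :
    (Matrix.of fun (p : Fin n × Fin n) (q : Fin n × Fin n) =>
      (if p.1 = p.2 then (1:ℂ) else 0) * (if q.1 = q.2 then (1:ℂ) else 0)).PosSemidef := by
  have h : (Matrix.of fun (p : Fin n × Fin n) (q : Fin n × Fin n) =>
      (if p.1 = p.2 then (1:ℂ) else 0) * (if q.1 = q.2 then (1:ℂ) else 0)) =
      (Matrix.of fun (_ : Fin 1) (p : Fin n × Fin n) => if p.1 = p.2 then (1:ℂ) else 0)ᴴ *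
      (Matrix.of fun (_ : Fin 1) (p : Fin n × Fin n) => if p.1 = p.2 then (1:ℂ) else 0) := by
    ext p q
    rw [Matrix.mul_apply, Fin.sum_univ_one, Matrix.conjTranspose_apply]
    simp only [Matrix.of_apply, apply_ite (star : ℂ → ℂ), star_one, star_zero]
  rw [h]
  exact Matrix.posSemidef_conjTranspose_mul_self _

/-- The interpolating state family used in the construction. -/
def auxSigma {n : ℕ} (ρ σ0 : Matrix (Fin n) (Fin n) ℂ) (θ : ℝ) :
    Matrix (Fin n) (Fin n) ℂ :=
  ((1 - θ : ℝ) : ℂ) • ρ + ((θ : ℝ) : ℂ) • σ0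

/-- The channel family used in the construction. -/
def auxPhi {n : ℕ} (ρ σ0 : Matrix (Fin n) (Fin n) ℂ) (θ : ℝ) :
    Matrix (Fin n) (Fin n) ℂ →ₗ[ℂ] Matrix (Fin n) (Fin n) ℂ where
  toFun τ := (2:ℂ)⁻¹ • (τ.trace • auxSigma ρ σ0 θ + τ)
  map_add' τ₁ τ₂ := by
    simp only [Matrix.trace_add, add_smul, smul_add]
    abel
  map_smul' c τ := by
    simp only [Matrix.trace_smul, smul_eq_mul, RingHom.id_apply]
    rw [mul_smul, ← smul_add, smul_comm (2:ℂ)⁻¹ c]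

lemma auxPhi_apply {n : ℕ} (ρ σ0 : Matrix (Fin n) (Fin n) ℂ) (θ : ℝ)
    (τ : Matrix (Fin n) (Fin n) ℂ) :
    auxPhi ρ σ0 θ τ = (2:ℂ)⁻¹ • (τ.trace • auxSigma ρ σ0 θ + τ) := rfl

lemma trace_stdBasis {n : ℕ} (i j : Fin n) :
    (Matrix.single i j (1:ℂ)).trace = if i = j then 1 else 0 := by
  by_cases h : i = j
  · subst h; rw [if_pos rfl]; exact Matrix.trace_single_eq_same i (1:ℂ)
  · rw [if_neg h]
    apply Matrix.trace_single_eq_of_ne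
    exact h

lemma choi_auxPhi {n : ℕ} (ρ σ0 : Matrix (Fin n) (Fin n) ℂ) (θ : ℝ) :
    choiMatrix (auxPhi ρ σ0 θ) =
      (2:ℂ)⁻¹ • (((1 : Matrix (Fin n) (Fin n) ℂ) ⊗ₖ auxSigma ρ σ0 θ) +
        Matrix.of fun (p : Fin n × Fin n) (q : Fin n × Fin n) =>
          (if p.1 = p.2 then (1:ℂ) else 0) * (if q.1 = q.2 then (1:ℂ) else 0)) := by
  ext ⟨a, b⟩ ⟨c, d⟩
  rw [choiMatrix]
  simp only [Matrix.sum_apply]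
  have hterm : ∀ i j : Fin n,
      ((Matrix.single i j (1:ℂ)) ⊗ₖ (auxPhi ρ σ0 θ (Matrix.single i j (1:ℂ)))) (a,b) (c,d)
      = (if i = a ∧ j = c then (1:ℂ) else 0) *
        ((2:ℂ)⁻¹ * ((if i = j then (1:ℂ) else 0) * auxSigma ρ σ0 θ b d +
          (if i = b ∧ j = d then (1:ℂ) else 0))) := by
    intro i j
    have h2 : (auxPhi ρ σ0 θ (Matrix.single i j (1:ℂ))) b d =
        (2:ℂ)⁻¹ * ((if i = j then (1:ℂ) else 0) * auxSigma ρ σ0 θ b d +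
          (if i = b ∧ j = d then (1:ℂ) else 0)) := by
      rw [auxPhi_apply]
      simp only [Matrix.smul_apply, Matrix.add_apply, smul_eq_mul, trace_stdBasis]
      rfl
    rw [Matrix.kroneckerMap_apply, h2]
    rfl
  calc (∑ i : Fin n, ∑ j : Fin n,
      ((Matrix.single i j (1:ℂ)) ⊗ₖ (auxPhi ρ σ0 θ (Matrix.single i j (1:ℂ)))) (a,b) (c,d))
      = ∑ i : Fin n, ∑ j : Fin n, (if i = a ∧ j = c then (1:ℂ) else 0) *
        ((2:ℂ)⁻¹ * ((if i = j then (1:ℂ) else 0) * auxSigma ρ σ0 θ b d +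
          (if i = b ∧ j = d then (1:ℂ) else 0))) :=
        Finset.sum_congr rfl fun i _ => Finset.sum_congr rfl fun j _ => hterm i j
  _ = (2:ℂ)⁻¹ * ((if a = c then (1:ℂ) else 0) * auxSigma ρ σ0 θ b d +
        (if a = b ∧ c = d then (1:ℂ) else 0)) := by
        rw [Finset.sum_eq_single a]
        · rw [Finset.sum_eq_single c]
          · simp
          · intro j _ hj; simp [hj]
          · intro h; exact absurd (Finset.mem_univ c) h
        · intro i _ hi
          rw [Finset.sum_eq_zero]
          intro j _
          simp [hi]
        · intro h; exact absurd (Finset.mem_univ a) h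
  _ = ((2:ℂ)⁻¹ • (((1 : Matrix (Fin n) (Fin n) ℂ) ⊗ₖ auxSigma ρ σ0 θ) +
        Matrix.of fun (p : Fin n × Fin n) (q : Fin n × Fin n) =>
          (if p.1 = p.2 then (1:ℂ) else 0) * (if q.1 = q.2 then (1:ℂ) else 0))) (a,b) (c,d) := by
        simp only [Matrix.smul_apply, Matrix.add_apply, Matrix.kroneckerMap_apply,
          Matrix.one_apply, Matrix.of_apply, smul_eq_mul]
        congr 2
        by_cases h1 : a = b <;> by_cases h2 : c = d <;> simp [h1, h2]

lemma derivWithin_affine (a b : ℝ) :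
    derivWithin (fun θ : ℝ => a + θ * b) (Set.Icc (0:ℝ) 1) 0 = b := by
  have h : HasDerivWithinAt (fun θ : ℝ => a + θ * b) b (Set.Icc (0:ℝ) 1) 0 :=
    ((hasDerivAt_mul_const b).const_add a).hasDerivWithinAt
  exact h.derivWithin (uniqueDiffOn_Icc one_pos 0 ⟨le_refl 0, zero_le_one⟩)

lemma fisher_combine {d w : ℝ} (h1 : 5/8 ≤ w) (h2 : w ≤ 7/8) :
    d^2/w + d^2/(1-w) = d^2/(w*(1-w)) := by
  have hw : w ≠ 0 := by intro h; rw [h] at h1; norm_num at h1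
  have hw1 : (1:ℝ) - w ≠ 0 := by
    intro h
    have hw1 : w = 1 := by linarith
    rw [hw1] at h2
    norm_num at h2
  field_simp
  ring

lemma fisher_mono_le {d u v : ℝ} (hu : 5/8 ≤ u) (huv : u ≤ v) (hv : v ≤ 7/8) :
    d^2/u + d^2/(1-u) ≤ d^2/v + d^2/(1-v) := by
  rw [fisher_combine hu (le_trans huv hv), fisher_combine (le_trans hu huv) hv]
  have hpos : 0 < v * (1-v) := by nlinarith
  have hle : v * (1-v) ≤ u * (1-u) := by nlinarith
  exact div_le_div_of_nonneg_left (sq_nonneg d) hpos hle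

lemma fisher_mono_lt {d u v : ℝ} (hd : d ≠ 0) (hu : 5/8 ≤ u) (huv : u < v) (hv : v ≤ 7/8) :
    d^2/u + d^2/(1-u) < d^2/v + d^2/(1-v) := by
  rw [fisher_combine hu (le_trans huv.le hv), fisher_combine (le_trans hu huv.le) hv]
  have hd2 : 0 < d^2 := lt_of_le_of_ne (sq_nonneg d) (Ne.symm (pow_ne_zero 2 hd))
  have hpos : 0 < v * (1-v) := by nlinarith
  have hlt : v * (1-v) < u * (1-u) := by nlinarith
  exact div_lt_div_of_pos_left hd2 hpos hlt

/-- The outcome probabilities of the constructed task are affine in `θ`. -/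
lemma outcome_aff {n : ℕ} (ρ σ0 : Matrix (Fin n) (Fin n) ℂ) {ι : Type}
    (M : ι → Matrix (Fin n) (Fin n) ℂ) (τ : Matrix (Fin n) (Fin n) ℂ)
    (hτ : τ.trace = 1) (i : ι) :
    outcomeProb (auxPhi ρ σ0) M τ i = fun θ : ℝ =>
      ((ρ * M i).trace.re + (τ * M i).trace.re) / 2 +
        θ * (((σ0 * M i).trace.re - (ρ * M i).trace.re) / 2) := by
  funext θ
  show ((auxPhi ρ σ0 θ τ * M i).trace).re = _
  have hmul : auxPhi ρ σ0 θ τ * M i =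
      (2:ℂ)⁻¹ • (τ.trace • (((1-θ:ℝ):ℂ) • (ρ * M i) + ((θ:ℝ):ℂ) • (σ0 * M i)) + τ * M i) := by
    rw [auxPhi_apply, auxSigma]
    rw [Matrix.smul_mul, Matrix.add_mul, Matrix.smul_mul, Matrix.add_mul, Matrix.smul_mul,
      Matrix.smul_mul]
  have htr : (auxPhi ρ σ0 θ τ * M i).trace =
      (2:ℂ)⁻¹ * ((((1-θ:ℝ):ℂ) * (ρ * M i).trace + ((θ:ℝ):ℂ) * (σ0 * M i).trace) +
        (τ * M i).trace) := by
    rw [hmul, hτ, one_smul]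
    rw [Matrix.trace_smul, Matrix.trace_add, Matrix.trace_add, Matrix.trace_smul,
      Matrix.trace_smul]
    simp [smul_eq_mul]
  rw [htr]
  have h2 : (2:ℂ)⁻¹ = ((2⁻¹ : ℝ) : ℂ) := by norm_num
  rw [h2, Complex.re_ofReal_mul, Complex.add_re, Complex.add_re, Complex.re_ofReal_mul,
    Complex.re_ofReal_mul]
  ring

/-- Value of the classical Fisher information of the constructed task at `θ0 = 0`. -/
lemma fisher_eval {n : ℕ} (ρ σ0 B τ : Matrix (Fin n) (Fin n) ℂ)
    (hρ : ρ.trace = 1) (hσ0 : σ0.trace = 1) (hτ : τ.trace = 1)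
    (hlo : 5/8 ≤ ((τ * B).trace).re) (hhi : ((τ * B).trace).re ≤ 7/8)
    (hrlo : 5/8 ≤ ((ρ * B).trace).re) (hrhi : ((ρ * B).trace).re ≤ 7/8) :
    classicalFisher (Set.Icc (0:ℝ) 1) (auxPhi ρ σ0) ![B, 1 - B] τ 0 =
      ((((σ0 * B).trace.re - (ρ * B).trace.re) / 2) ^ 2) /
          (((ρ * B).trace.re + (τ * B).trace.re) / 2) +
      ((((σ0 * B).trace.re - (ρ * B).trace.re) / 2) ^ 2) /
          (1 - ((ρ * B).trace.re + (τ * B).trace.re) / 2) := by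
  set M : Fin 2 → Matrix (Fin n) (Fin n) ℂ := ![B, 1 - B] with hM
  have hM0 : M 0 = B := rfl
  have hM1 : M 1 = 1 - B := rfl
  have hsub : ∀ X : Matrix (Fin n) (Fin n) ℂ, X.trace = 1 →
      ((X * (1 - B)).trace).re = 1 - ((X * B).trace).re := by
    intro X hX
    rw [Matrix.mul_sub, Matrix.mul_one, Matrix.trace_sub, Complex.sub_re, hX, Complex.one_re]
  have h0 := outcome_aff ρ σ0 M τ hτ 0
  have h1 := outcome_aff ρ σ0 M τ hτ 1
  rw [hM0] at h0
  rw [hM1] at h1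
  rw [classicalFisher, Fin.sum_univ_two]
  rw [h0, h1]
  simp only [hsub ρ hρ, hsub σ0 hσ0, hsub τ hτ]
  rw [derivWithin_affine, derivWithin_affine]
  simp only [zero_mul, add_zero]
  rw [if_pos (by linarith), if_pos (by linarith)]
  ring
end Aux

set_option maxHeartbeats 2000000 in
/-- Theorem 1 of the paper: a state `ρ` is resourceful (`ρ ∉ F`) iff there
is a parameter estimation task whose classical Fisher information separates `ρ` from all
free states. -/
theorem fisher_universally_identifies_states {n : ℕ}
    (F : Set (Matrix (Fin n) (Fin n) ℂ)) (hFne : F.Nonempty) (hFcl : IsClosed F)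
    (hFconv : Convex ℝ F) (hFdm : ∀ σ ∈ F, IsDensityMatrix σ)
    (ρ : Matrix (Fin n) (Fin n) ℂ) (hρ : IsDensityMatrix ρ) :
    ρ ∉ F ↔
      ∃ (m : ℕ) (ι : Type) (_ : Fintype ι) (J : Set ℝ)
        (Φ : ℝ → (Matrix (Fin n) (Fin n) ℂ →ₗ[ℂ] Matrix (Fin m) (Fin m) ℂ))
        (M : ι → Matrix (Fin m) (Fin m) ℂ) (θ0 : ℝ) (c : ℝ),
        IsEstimationTask J Φ M ∧ θ0 ∈ J ∧
        (∀ σ ∈ F, classicalFisher J Φ M σ θ0 ≤ c) ∧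
        c < classicalFisher J Φ M ρ θ0 := by
  constructor
  · intro hρF
    haveI : LocallyConvexSpace ℝ (Matrix (Fin n) (Fin n) ℂ) :=
      inferInstanceAs (LocallyConvexSpace ℝ (Fin n → Fin n → ℂ))
    obtain ⟨f, u', hfF, hfρ⟩ := geometric_hahn_banach_closed_point hFconv hFcl hρF
    obtain ⟨A, hAherm, hArep⟩ := repr_exists f
    obtain ⟨σ0, hσ0F⟩ := hFne
    obtain ⟨hσ0psd, hσ0tr⟩ := hFdm σ0 hσ0F
    obtain ⟨hρpsd, hρtr⟩ := hρ
    set K : ℝ := ∑ i, ∑ j, ‖A i j‖ with hK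
    have hKnn : 0 ≤ K :=
      Finset.sum_nonneg fun i _ => Finset.sum_nonneg fun j _ => norm_nonneg _
    set t : ℝ := (8 * (K + 1))⁻¹ with ht
    have htpos : 0 < t := by rw [ht]; positivity
    have htK : |t| * K ≤ 1/8 := by
      rw [abs_of_pos htpos, ht]
      rw [inv_mul_le_iff₀ (by positivity)]
      nlinarith
    have htKneg : |(-t)| * K ≤ 1/8 := by rwa [abs_neg]
    set B : Matrix (Fin n) (Fin n) ℂ := ((3/4 : ℝ) : ℂ) • 1 + ((t : ℝ) : ℂ) • A with hB
    -- PSD facts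
    have hBpsd : B.PosSemidef := psd_shift hAherm (by linarith : |t| * K ≤ (3/4:ℝ))
    have h1Beq : (1 : Matrix (Fin n) (Fin n) ℂ) - B =
        ((1/4 : ℝ) : ℂ) • 1 + ((-t : ℝ) : ℂ) • A := by
      rw [hB]
      push_cast
      module
    have h1Bpsd : ((1 : Matrix (Fin n) (Fin n) ℂ) - B).PosSemidef := by
      rw [h1Beq]; exact psd_shift hAherm (by linarith : |(-t)| * K ≤ (1/4:ℝ))
    have hB58 : B - ((5/8 : ℝ) : ℂ) • 1 = ((1/8 : ℝ) : ℂ) • 1 + ((t : ℝ) : ℂ) • A := by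
      rw [hB]; push_cast; module
    have hB78 : ((7/8 : ℝ) : ℂ) • 1 - B = ((1/8 : ℝ) : ℂ) • 1 + ((-t : ℝ) : ℂ) • A := by
      rw [hB]; push_cast; module
    have hB58psd : (B - ((5/8 : ℝ) : ℂ) • 1).PosSemidef := by
      rw [hB58]; exact psd_shift hAherm (by linarith : |t| * K ≤ (1/8:ℝ))
    have hB78psd : (((7/8 : ℝ) : ℂ) • 1 - B).PosSemidef := by
      rw [hB78]; exact psd_shift hAherm (by linarith : |(-t)| * K ≤ (1/8:ℝ))
    -- p bounds for density matrices
    have hpb : ∀ τ : Matrix (Fin n) (Fin n) ℂ, IsDensityMatrix τ →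
        5/8 ≤ ((τ * B).trace).re ∧ ((τ * B).trace).re ≤ 7/8 := by
      intro τ ⟨hτpsd, hτtr⟩
      constructor
      · have h := trace_mul_psd_re_nonneg hτpsd hB58psd
        have heq : (τ * (B - ((5/8 : ℝ) : ℂ) • 1)).trace = (τ * B).trace - ((5/8:ℝ):ℂ) := by
          rw [Matrix.mul_sub, Matrix.trace_sub, Matrix.mul_smul, Matrix.mul_one,
            Matrix.trace_smul, hτtr, smul_eq_mul, mul_one]
        rw [heq, Complex.sub_re, Complex.ofReal_re] at h
        linarith
      · have h := trace_mul_psd_re_nonneg hτpsd hB78psd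
        have heq : (τ * (((7/8 : ℝ) : ℂ) • 1 - B)).trace = ((7/8:ℝ):ℂ) - (τ * B).trace := by
          rw [Matrix.mul_sub, Matrix.trace_sub, Matrix.mul_smul, Matrix.mul_one,
            Matrix.trace_smul, hτtr, smul_eq_mul, mul_one]
        rw [heq, Complex.sub_re, Complex.ofReal_re] at h
        linarith
    -- p as affine function of f
    have hpf : ∀ τ : Matrix (Fin n) (Fin n) ℂ, τ.IsHermitian → τ.trace = 1 →
        ((τ * B).trace).re = 3/4 + t * f τ := by
      intro τ hτh hτtr
      have heq : (τ * B).trace = ((3/4:ℝ):ℂ) * τ.trace + ((t:ℝ):ℂ) * (A * τ).trace := by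
        rw [hB, Matrix.mul_add, Matrix.trace_add, Matrix.mul_smul, Matrix.mul_one,
          Matrix.trace_smul, Matrix.mul_smul, Matrix.trace_smul, smul_eq_mul, smul_eq_mul,
          Matrix.trace_mul_comm]
      rw [heq, Complex.add_re, Complex.re_ofReal_mul, Complex.re_ofReal_mul, hτtr,
        Complex.one_re, hArep τ hτh]
      ring
    set rr : ℝ := ((ρ * B).trace).re with hrr
    set ss : ℝ := ((σ0 * B).trace).re with hss
    set d : ℝ := (ss - rr) / 2 with hd
    have hrrf : rr = 3/4 + t * f ρ := hpf ρ hρpsd.1 hρtr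
    have hssf : ss = 3/4 + t * f σ0 := hpf σ0 hσ0psd.1 hσ0tr
    have hrrb := hpb ρ ⟨hρpsd, hρtr⟩
    have hssb := hpb σ0 ⟨hσ0psd, hσ0tr⟩
    have hfσ0 : f σ0 < u' := hfF σ0 hσ0F
    have hdneg : d < 0 := by
      rw [hd, hssf, hrrf]
      have : f σ0 < f ρ := lt_trans hfσ0 hfρ
      nlinarith
    set ustar : ℝ := (rr + (3/4 + t * u')) / 2 with hustar
    have hustar_lt : ustar < rr := by
      rw [hustar, hrrf]
      nlinarith [hfρ]
    have hustar_ge : 5/8 ≤ ustar := by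
      have h1 : (rr + ss)/2 ≤ ustar := by
        rw [hustar, hssf]
        nlinarith [hfσ0]
      nlinarith [hrrb.1, hssb.1]
    have hustar_le : ustar ≤ 7/8 := le_trans hustar_lt.le hrrb.2
    -- the task
    refine ⟨n, Fin 2, inferInstance, Set.Icc (0:ℝ) 1, auxPhi ρ σ0, ![B, 1 - B], 0,
      d^2/ustar + d^2/(1 - ustar), ?_, ?_, ?_, ?_⟩
    · -- IsEstimationTask
      refine ⟨Set.ordConnected_Icc, ?_, ?_, ?_⟩
      · -- CPTP
        intro θ hθ
        constructor
        · intro X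
          rw [auxPhi_apply, Matrix.trace_smul, Matrix.trace_add, Matrix.trace_smul, auxSigma,
            Matrix.trace_add, Matrix.trace_smul, Matrix.trace_smul, hρtr, hσ0tr]
          simp only [smul_eq_mul, mul_one]
          push_cast
          ring
        · rw [choi_auxPhi]
          have h2 : (2:ℂ)⁻¹ = (((2:ℝ)⁻¹ : ℝ) : ℂ) := by norm_num
          rw [h2]
          have hσθ : (auxSigma ρ σ0 θ).PosSemidef := by
            rw [auxSigma]
            exact Matrix.PosSemidef.add
              (psd_real_smul hρpsd (by simp at hθ; linarith [hθ.2]))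
              (psd_real_smul hσ0psd (by simp at hθ; linarith [hθ.1]))
          exact psd_real_smul (c := (2:ℝ)⁻¹)
            (Matrix.PosSemidef.add (one_kron_psd hσθ) (maxent_psd (n := n))) (by norm_num)
      · -- POVM
        constructor
        · intro i
          fin_cases i
          · exact hBpsd
          · exact h1Bpsd
        · rw [Fin.sum_univ_two]
          show B + (1 - B) = 1
          abel
      · -- differentiability
        intro τ hτ i
        rw [outcome_aff ρ σ0 _ τ hτ.2 i]
        exact ((differentiable_const _).add
          ((differentiable_id).mul (differentiable_const _))).differentiableOn
    · exact ⟨le_refl 0, zero_le_one⟩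
    · -- free states bounded
      intro σ hσF
      obtain ⟨hσpsd, hσtr⟩ := hFdm σ hσF
      have hσb := hpb σ ⟨hσpsd, hσtr⟩
      rw [fisher_eval ρ σ0 B σ hρtr hσ0tr hσtr hσb.1 hσb.2 hrrb.1 hrrb.2]
      have hw : (rr + ((σ * B).trace).re)/2 ≤ ustar := by
        have := hpf σ hσpsd.1 hσtr
        rw [hustar, this]
        nlinarith [hfF σ hσF]
      have hw5 : 5/8 ≤ (rr + ((σ * B).trace).re)/2 := by
        have := hσb.1; linarith [hrrb.1]
      exact fisher_mono_le hw5 hw hustar_le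
    · -- resourceful state exceeds
      rw [fisher_eval ρ σ0 B ρ hρtr hσ0tr hρtr hrrb.1 hrrb.2 hrrb.1 hrrb.2, ← hrr, ← hss,
        ← hd]
      have hwρ : (rr + rr)/2 = rr := by ring
      rw [hwρ]
      exact fisher_mono_lt (ne_of_lt hdneg) hustar_ge hustar_lt hrrb.2
  · rintro ⟨m, ι, _, J, Φ, M, θ0, c, htask, hθ0, hFle, hρgt⟩ hρF
    exact absurd (hFle ρ hρF) (not_le.mpr hρgt)

end
end

section
/- Let F be a nonempty closed convex set of density matrices on ℂ^n and let ρ be a density matrix with ρ ∉ F. Then there exists a Hermitian matrix E with 0 ≤ E ≤ I (both E and I − E positive semidefinite) such that, setting m := min_{σ∈F} Re Tr(Eσ) (the minimum is attained since F is compact), one has 0 < m < 1 and (Re Tr(Eρ) − m)² / (m(1−m)) > (Re Tr(Eσ) − m)² / (m(1−m)) for every σ ∈ F. -/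
open Matrix
open scoped Kronecker BigOperators ComplexOrder ENNReal EReal

noncomputable section

section AuxiliaryLemmas

variable {n : ℕ}

instance matrixLocallyConvexAux : LocallyConvexSpace ℝ (Matrix (Fin n) (Fin n) ℂ) :=
  inferInstanceAs (LocallyConvexSpace ℝ (Fin n → Fin n → ℂ))

lemma retrace_expand_aux (K A : Matrix (Fin n) (Fin n) ℂ) :
    ((K * A).trace).re = ∑ i, ∑ j, ((K i j) * (A j i)).re := by
  simp [Matrix.trace, Matrix.mul_apply, Complex.re_sum, Matrix.diag]

lemma repr_lemma_aux (f : Matrix (Fin n) (Fin n) ℂ →L[ℝ] ℝ) :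
    ∃ K : Matrix (Fin n) (Fin n) ℂ, ∀ A, ((K * A).trace).re = f A := by
  refine ⟨Matrix.of fun i j => (f (single j i 1) : ℂ) -
      (f (single j i Complex.I) : ℂ) * Complex.I, fun A => ?_⟩
  rw [retrace_expand_aux]
  have hA : A = ∑ p : Fin n, ∑ q : Fin n,
      ((A p q).re • single p q (1:ℂ) + (A p q).im • single p q Complex.I) := by
    nth_rewrite 1 [matrix_eq_sum_single A]
    refine Finset.sum_congr rfl fun p _ => Finset.sum_congr rfl fun q _ => ?_
    rw [smul_single, smul_single, ← single_add]
    simp [Complex.real_smul, Complex.re_add_im]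
  nth_rewrite 2 [hA]
  rw [map_sum, Finset.sum_comm]
  refine Finset.sum_congr rfl fun j _ => ?_
  rw [map_sum]
  refine Finset.sum_congr rfl fun i _ => ?_
  rw [map_add, f.map_smul, f.map_smul]
  simp [Complex.sub_re, Complex.mul_re, Complex.mul_im, smul_eq_mul]
  ring

lemma flip_lemma_aux (K A : Matrix (Fin n) (Fin n) ℂ) (hA : Aᴴ = A) :
    ((Kᴴ * A).trace).re = ((K * A).trace).re := by
  have : (Kᴴ * A).trace = star ((K * A).trace) := by
    calc (Kᴴ * A).trace = (Kᴴ * Aᴴ).trace := by rw [hA]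
    _ = ((A * K)ᴴ).trace := by rw [conjTranspose_mul]
    _ = star ((A * K).trace) := trace_conjTranspose _
    _ = star ((K * A).trace) := by rw [trace_mul_comm]
  rw [this, Complex.star_def, Complex.conj_re]

lemma quad_expand_aux (M : Matrix (Fin n) (Fin n) ℂ) (x : Fin n → ℂ) :
    dotProduct (star x) (M *ᵥ x) = ∑ i, ∑ j, star (x i) * M i j * x j := by
  simp [dotProduct, Matrix.mulVec, Finset.mul_sum, mul_assoc]

lemma herm_quad_real_aux (M : Matrix (Fin n) (Fin n) ℂ) (hM : M.IsHermitian) (x : Fin n → ℂ) :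
    (dotProduct (star x) (M *ᵥ x)).im = 0 := by
  have key : star (dotProduct (star x) (M *ᵥ x)) = dotProduct (star x) (M *ᵥ x) := by
    rw [quad_expand_aux, star_sum]
    simp only [star_sum, star_mul', star_star]
    rw [Finset.sum_comm]
    refine Finset.sum_congr rfl fun i _ => Finset.sum_congr rfl fun j _ => ?_
    have : star (M j i) = M i j := by
      conv_rhs => rw [← hM.eq]
      rw [conjTranspose_apply]
    rw [this]; ring
  exact Complex.conj_eq_iff_im.mp key

lemma sum_two_aux {i j : Fin n} (hij : i ≠ j) (g : Fin n → ℂ)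
    (hg : ∀ k, k ≠ i → k ≠ j → g k = 0) : ∑ k, g k = g i + g j := by
  rw [← Finset.sum_pair hij]
  refine (Finset.sum_subset (Finset.subset_univ _) fun k _ hk => ?_).symm
  simp only [Finset.mem_insert, Finset.mem_singleton, not_or] at hk
  exact hg k hk.1 hk.2

lemma quad_two_aux (M : Matrix (Fin n) (Fin n) ℂ) (i j : Fin n) (hij : i ≠ j) (a b : ℂ) :
    dotProduct (star (Pi.single i a + Pi.single j b)) (M *ᵥ (Pi.single i a + Pi.single j b)) =
      star a * M i i * a + star a * M i j * b + star b * M j i * a + star b * M j j * b := by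
  rw [quad_expand_aux]
  set x : Fin n → ℂ := Pi.single i a + Pi.single j b with hxdef
  have hxi : x i = a := by simp [hxdef, Pi.single_apply, hij.symm]
  have hxj : x j = b := by simp [hxdef, Pi.single_apply, hij]
  have hx0 : ∀ k, k ≠ i → k ≠ j → x k = 0 := by
    intro k h1 h2; simp [hxdef, Pi.single_apply, h1, h2]
  rw [sum_two_aux hij _ (fun k h1 h2 => by simp [hx0 k h1 h2])]
  rw [sum_two_aux hij _ (fun l h1 h2 => by simp [hx0 l h1 h2]),
      sum_two_aux hij _ (fun l h1 h2 => by simp [hx0 l h1 h2])]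
  rw [hxi, hxj]; ring

lemma quad_one_aux (M : Matrix (Fin n) (Fin n) ℂ) (i : Fin n) (a : ℂ) :
    dotProduct (star (Pi.single i a)) (M *ᵥ Pi.single i a) = star a * M i i * a := by
  rw [quad_expand_aux]
  rw [Finset.sum_eq_single i (fun k _ hk => by
    simp [Pi.single_apply, hk]) (by simp)]
  rw [Finset.sum_eq_single i (fun l _ hl => by
    simp [Pi.single_apply, hl]) (by simp)]
  simp

lemma diag_re_nonneg_aux {σ : Matrix (Fin n) (Fin n) ℂ} (h : σ.PosSemidef) (k : Fin n) :
    0 ≤ (σ k k).re ∧ (σ k k).im = 0 := by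
  have h1 := h.dotProduct_mulVec_nonneg (Pi.single k 1)
  rw [quad_one_aux] at h1
  simp only [star_one, one_mul, mul_one] at h1
  rw [Complex.le_def] at h1
  simpa using ⟨h1.1, h1.2.symm⟩

lemma diag_re_sum_aux {σ : Matrix (Fin n) (Fin n) ℂ} (h : σ.trace = 1) :
    ∑ k, (σ k k).re = 1 := by
  have := congrArg Complex.re h
  simpa [Matrix.trace, Complex.re_sum, Matrix.diag] using this

lemma entry_bound_aux {σ : Matrix (Fin n) (Fin n) ℂ} (h : IsDensityMatrix σ) (i j : Fin n) :
    ‖σ i j‖ ≤ 1 := by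
  obtain ⟨hpsd, htr⟩ := h
  have hdr := fun k => (diag_re_nonneg_aux hpsd k).1
  have hdi := fun k => (diag_re_nonneg_aux hpsd k).2
  have hsum := diag_re_sum_aux htr
  have hle : ∀ k, (σ k k).re ≤ 1 := by
    intro k
    rw [← hsum]
    exact Finset.single_le_sum (fun l _ => hdr l) (Finset.mem_univ k)
  rcases eq_or_ne i j with rfl | hij
  · have : σ i i = ((σ i i).re : ℂ) := Complex.ext rfl (by simp [hdi i])
    rw [this, Complex.norm_real, Real.norm_eq_abs, abs_of_nonneg (hdr i)]
    exact hle i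
  · set c := σ i j with hc
    rcases eq_or_ne c 0 with h0 | h0
    · simp [← hc, h0]
    have hji : σ j i = star c := by
      conv_lhs => rw [← hpsd.1.eq]
      rw [conjTranspose_apply]
    set r := ‖c‖ with hr
    have hrpos : 0 < r := norm_pos_iff.mpr h0
    have hq := hpsd.dotProduct_mulVec_nonneg (Pi.single i (r : ℂ) + Pi.single j (-star c))
    rw [quad_two_aux _ _ _ hij] at hq
    rw [hji] at hq
    have hcc2 : c * star c = (r:ℂ)^2 := by
      rw [Complex.star_def, Complex.mul_conj, hr]
      norm_cast
      rw [Complex.sq_norm]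
    have hq2 : (0:ℂ) ≤ ((r^2:ℝ):ℂ) * σ i i + ((r^2:ℝ):ℂ) * σ j j - ((2*r^3 :ℝ):ℂ) := by
      convert hq using 1
      have h1 : star ((r:ℂ)) = (r:ℂ) := by simp [Complex.star_def, Complex.conj_ofReal]
      have h2 : star (-star c) = -c := by simp
      rw [h1, h2, ← hc]
      push_cast
      linear_combination (2*(r:ℂ) - σ j j) * hcc2
    rw [Complex.le_def] at hq2
    have hre := hq2.1
    simp only [Complex.sub_re, Complex.add_re, Complex.re_ofReal_mul, Complex.ofReal_re,
      Complex.zero_re] at hre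
    have hpair : (σ i i).re + (σ j j).re ≤ 1 := by
      rw [← hsum]
      have hsub : ({i, j} : Finset (Fin n)) ⊆ Finset.univ := Finset.subset_univ _
      have := Finset.sum_le_sum_of_subset_of_nonneg hsub (fun k _ _ => hdr k)
      rwa [Finset.sum_pair hij] at this
    nlinarith [hrpos, sq_nonneg r]

lemma compact_aux (F : Set (Matrix (Fin n) (Fin n) ℂ)) (hFcl : IsClosed F)
    (hFb : ∀ σ ∈ F, ∀ i j, ‖σ i j‖ ≤ 1) : IsCompact F := by
  have h1 : IsCompact (Set.pi Set.univ fun _ : Fin n =>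
      (Set.pi Set.univ fun _ : Fin n => Metric.closedBall (0:ℂ) 1)) :=
    isCompact_univ_pi fun _ => isCompact_univ_pi fun _ => isCompact_closedBall _ _
  have heq : {A : Matrix (Fin n) (Fin n) ℂ | ∀ i j, ‖A i j‖ ≤ 1} =
      Set.pi Set.univ (fun _ : Fin n => Set.pi Set.univ fun _ : Fin n =>
        Metric.closedBall (0:ℂ) 1) := by
    ext A
    have hmem : A ∈ Set.pi Set.univ (fun _ : Fin n => Set.pi Set.univ fun _ : Fin n =>
        Metric.closedBall (0:ℂ) 1) ↔
        ∀ i ∈ (Set.univ : Set (Fin n)), ∀ j ∈ (Set.univ : Set (Fin n)),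
          A i j ∈ Metric.closedBall (0:ℂ) 1 := Iff.rfl
    rw [Set.mem_setOf_eq]; refine Iff.trans ?_ hmem.symm
    simp [Complex.dist_eq]
  have hcomp : IsCompact {A : Matrix (Fin n) (Fin n) ℂ | ∀ i j, ‖A i j‖ ≤ 1} := by
    rw [heq]; exact h1
  exact hcomp.of_isClosed_subset hFcl (fun σ hσ => hFb σ hσ)

lemma quad_bound_aux (H : Matrix (Fin n) (Fin n) ℂ) (x : Fin n → ℂ) :
    |(dotProduct (star x) (H *ᵥ x)).re| ≤
      (∑ i, ∑ j, ‖H i j‖) * ∑ i, Complex.normSq (x i) := by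
  set S := ∑ i, Complex.normSq (x i) with hS
  have hS0 : 0 ≤ S := Finset.sum_nonneg fun i _ => Complex.normSq_nonneg _
  have hxb : ∀ i, ‖x i‖ ^ 2 ≤ S := by
    intro i
    rw [Complex.sq_norm]
    exact Finset.single_le_sum (fun l _ => Complex.normSq_nonneg _) (Finset.mem_univ i)
  rw [quad_expand_aux]
  calc |(∑ i, ∑ j, star (x i) * H i j * x j).re|
      ≤ ‖∑ i, ∑ j, star (x i) * H i j * x j‖ := Complex.abs_re_le_norm _
    _ ≤ ∑ i, ‖∑ j, star (x i) * H i j * x j‖ := norm_sum_le _ _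
    _ ≤ ∑ i, ∑ j, ‖star (x i) * H i j * x j‖ :=
        Finset.sum_le_sum fun i _ => norm_sum_le _ _
    _ ≤ ∑ i, ∑ j, ‖H i j‖ * S := by
        refine Finset.sum_le_sum fun i _ => Finset.sum_le_sum fun j _ => ?_
        rw [norm_mul, norm_mul, Complex.star_def, Complex.norm_conj]
        have h1 := hxb i
        have h2 := hxb j
        have hai : 0 ≤ ‖x i‖ := norm_nonneg _
        have haj : 0 ≤ ‖x j‖ := norm_nonneg _
        have hH0 : 0 ≤ ‖H i j‖ := norm_nonneg _
        have : ‖x i‖ * ‖x j‖ ≤ S := by nlinarith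
        calc ‖x i‖ * ‖H i j‖ * ‖x j‖
            = ‖H i j‖ * (‖x i‖ * ‖x j‖) := by ring
          _ ≤ ‖H i j‖ * S := mul_le_mul_of_nonneg_left this hH0
    _ = (∑ i, ∑ j, ‖H i j‖) * S := by
        rw [Finset.sum_mul]
        exact Finset.sum_congr rfl fun i _ => (Finset.sum_mul _ _ _).symm

end AuxiliaryLemmas

/-- for any resourceful state `ρ ∉ F` there is an effect `E`
(a two-outcome POVM element, `0 ≤ E ≤ I`) whose minimum expectation `m` over the free
set lies in `(0,1)` and whose induced binary Fisher information strictly separates `ρ`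
from every free state. -/
theorem effect_fisher_witness {n : ℕ}
    (F : Set (Matrix (Fin n) (Fin n) ℂ)) (hFne : F.Nonempty) (hFcl : IsClosed F)
    (hFconv : Convex ℝ F) (hFdm : ∀ σ ∈ F, IsDensityMatrix σ)
    (ρ : Matrix (Fin n) (Fin n) ℂ) (hρ : IsDensityMatrix ρ) (hρF : ρ ∉ F) :
    ∃ E : Matrix (Fin n) (Fin n) ℂ, E.PosSemidef ∧ (1 - E).PosSemidef ∧
      ∃ σ0 ∈ F,
        (∀ σ ∈ F, ((E * σ0).trace).re ≤ ((E * σ).trace).re) ∧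
        0 < ((E * σ0).trace).re ∧ ((E * σ0).trace).re < 1 ∧
        ∀ σ ∈ F,
          (((E * σ).trace).re - ((E * σ0).trace).re) ^ 2 /
              (((E * σ0).trace).re * (1 - ((E * σ0).trace).re)) <
            (((E * ρ).trace).re - ((E * σ0).trace).re) ^ 2 /
              (((E * σ0).trace).re * (1 - ((E * σ0).trace).re)) := by
  obtain ⟨f, u, hfu, huρ⟩ := geometric_hahn_banach_closed_point hFconv hFcl hρF
  obtain ⟨K, hK⟩ := repr_lemma_aux f
  set H : Matrix (Fin n) (Fin n) ℂ := K + Kᴴ with hHdef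
  have hHherm : H.IsHermitian := by
    rw [Matrix.IsHermitian, hHdef, conjTranspose_add, conjTranspose_conjTranspose, add_comm]
  have hHtr : ∀ A : Matrix (Fin n) (Fin n) ℂ, Aᴴ = A → ((H * A).trace).re = 2 * f A := by
    intro A hA
    rw [hHdef, add_mul, trace_add, Complex.add_re, hK, flip_lemma_aux K A hA, hK]; ring
  set C := ∑ i, ∑ j, ‖H i j‖ with hCdef
  have hC0 : 0 ≤ C :=
    Finset.sum_nonneg fun i _ => Finset.sum_nonneg fun j _ => norm_nonneg _
  set δ : ℝ := (4 * (C + 1))⁻¹ with hδdef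
  have hδ0 : 0 < δ := by rw [hδdef]; positivity
  have hδC : δ * C ≤ 4⁻¹ := by
    rw [hδdef]
    have h4 : (0:ℝ) < 4 * (C + 1) := by positivity
    rw [inv_mul_le_iff₀ h4]
    nlinarith
  -- positive semidefiniteness of ½·1 + ε·H for small ε
  have hEherm : ∀ ε : ℝ, ((2⁻¹ : ℝ) • (1 : Matrix (Fin n) (Fin n) ℂ) + ε • H).IsHermitian := by
    intro ε
    rw [Matrix.IsHermitian, conjTranspose_add, conjTranspose_smul, conjTranspose_smul,
      conjTranspose_one, hHherm.eq, star_trivial, star_trivial]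
  have hquadE : ∀ ε : ℝ, |ε| * C ≤ 4⁻¹ →
      ((2⁻¹ : ℝ) • (1 : Matrix (Fin n) (Fin n) ℂ) + ε • H).PosSemidef := by
    intro ε hε
    refine Matrix.PosSemidef.of_dotProduct_mulVec_nonneg (hEherm ε) fun x => ?_
    have hsplit : dotProduct (star x) (((2⁻¹ : ℝ) • (1 : Matrix (Fin n) (Fin n) ℂ) + ε • H) *ᵥ x)
        = (2⁻¹:ℝ) • (dotProduct (star x) x) + ε • (dotProduct (star x) (H *ᵥ x)) := by
      rw [add_mulVec, smul_mulVec, smul_mulVec, one_mulVec, dotProduct_add,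
        dotProduct_smul, dotProduct_smul]
    have hxx : dotProduct (star x) x = ((∑ i, Complex.normSq (x i) : ℝ) : ℂ) := by
      rw [dotProduct]
      push_cast
      exact Finset.sum_congr rfl fun i _ => by
        rw [Pi.star_apply, Complex.star_def, mul_comm, Complex.mul_conj]
    set S := ∑ i, Complex.normSq (x i) with hSdef
    have hS0 : 0 ≤ S := Finset.sum_nonneg fun i _ => Complex.normSq_nonneg _
    have hqb := quad_bound_aux H x
    rw [Complex.le_def]
    constructor
    · rw [hsplit, hxx, Complex.add_re, Complex.real_smul, Complex.real_smul,
        Complex.re_ofReal_mul, Complex.re_ofReal_mul, Complex.ofReal_re, Complex.zero_re]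
      have habs : |ε * (dotProduct (star x) (H *ᵥ x)).re| ≤ 4⁻¹ * S := by
        rw [abs_mul]
        calc |ε| * |(dotProduct (star x) (H *ᵥ x)).re| ≤ |ε| * (C * S) :=
              mul_le_mul_of_nonneg_left hqb (abs_nonneg _)
          _ = (|ε| * C) * S := by ring
          _ ≤ 4⁻¹ * S := mul_le_mul_of_nonneg_right hε hS0
      have := abs_le.mp habs
      nlinarith [this.1]
    · rw [Complex.zero_im, herm_quad_real_aux _ (hEherm ε) x]
  set E : Matrix (Fin n) (Fin n) ℂ := (2⁻¹ : ℝ) • 1 + δ • H with hEdef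
  have hEpsd : E.PosSemidef := hquadE δ (by rwa [abs_of_pos hδ0])
  have h1E : (1 : Matrix (Fin n) (Fin n) ℂ) - E =
      (2⁻¹ : ℝ) • (1 : Matrix (Fin n) (Fin n) ℂ) + (-δ) • H := by
    rw [hEdef]; module
  have h1Epsd : ((1 : Matrix (Fin n) (Fin n) ℂ) - E).PosSemidef := by
    rw [h1E]
    exact hquadE (-δ) (by rwa [abs_neg, abs_of_pos hδ0])
  -- trace values
  have hEtr : ∀ A : Matrix (Fin n) (Fin n) ℂ, IsDensityMatrix A →
      ((E * A).trace).re = 2⁻¹ + δ * (2 * f A) := by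
    intro A hA
    rw [hEdef, add_mul, smul_mul_assoc, smul_mul_assoc, one_mul, trace_add, trace_smul,
      trace_smul, Complex.add_re, Complex.real_smul, Complex.real_smul, Complex.re_ofReal_mul,
      Complex.re_ofReal_mul, hA.2, hHtr A hA.1.1, Complex.one_re]
    ring
  -- compactness and the minimizer
  have hFb : ∀ σ ∈ F, ∀ i j, ‖σ i j‖ ≤ 1 := fun σ hσ => entry_bound_aux (hFdm σ hσ)
  have hFK : IsCompact F := compact_aux F hFcl hFb
  obtain ⟨σ0, hσ0F, hσ0min⟩ := hFK.exists_isMinOn hFne f.continuous.continuousOn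
  have hmin : ∀ σ ∈ F, f σ0 ≤ f σ := fun σ hσ => isMinOn_iff.mp hσ0min σ hσ
  have htrHb : ∀ σ ∈ F, |2 * f σ| ≤ C := by
    intro σ hσ
    rw [← hHtr σ (hFdm σ hσ).1.1, hCdef]
    calc |((H * σ).trace).re| ≤ ∑ i, ∑ j, |((H i j) * (σ j i)).re| := by
          rw [retrace_expand_aux]
          exact (Finset.abs_sum_le_sum_abs _ _).trans
            (Finset.sum_le_sum fun i _ => Finset.abs_sum_le_sum_abs _ _)
      _ ≤ ∑ i, ∑ j, ‖H i j‖ := by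
          refine Finset.sum_le_sum fun i _ => Finset.sum_le_sum fun j _ => ?_
          calc |((H i j) * (σ j i)).re| ≤ ‖H i j * σ j i‖ := Complex.abs_re_le_norm _
            _ = ‖H i j‖ * ‖σ j i‖ := norm_mul _ _
            _ ≤ ‖H i j‖ * 1 :=
                mul_le_mul_of_nonneg_left (hFb σ hσ j i) (norm_nonneg _)
            _ = _ := mul_one _
  have hm : ((E * σ0).trace).re = 2⁻¹ + δ * (2 * f σ0) := hEtr σ0 (hFdm σ0 hσ0F)
  have hb0 := abs_le.mp (htrHb σ0 hσ0F)
  have hδf0 : |δ * (2 * f σ0)| ≤ 4⁻¹ := by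
    rw [abs_mul, abs_of_pos hδ0]
    calc δ * |2 * f σ0| ≤ δ * C := mul_le_mul_of_nonneg_left (htrHb σ0 hσ0F) hδ0.le
      _ ≤ 4⁻¹ := hδC
  have hδf0' := abs_le.mp hδf0
  have hm0 : 0 < ((E * σ0).trace).re := by rw [hm]; linarith [hδf0'.1]
  have hm1 : ((E * σ0).trace).re < 1 := by rw [hm]; linarith [hδf0'.2]
  refine ⟨E, hEpsd, h1Epsd, σ0, hσ0F, ?_, hm0, hm1, ?_⟩
  · intro σ hσ
    rw [hm, hEtr σ (hFdm σ hσ)]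
    have := hmin σ hσ
    nlinarith
  · intro σ hσ
    have hd : 0 < ((E * σ0).trace).re * (1 - ((E * σ0).trace).re) := by
      have := mul_pos hm0 (by linarith : (0:ℝ) < 1 - ((E * σ0).trace).re)
      exact this
    rw [div_lt_div_iff₀ hd hd]
    have h1 : f σ0 ≤ f σ := hmin σ hσ
    have h2 : f σ < u := hfu σ hσ
    have h3 : u < f ρ := huρ
    have hsq : (((E * σ).trace).re - ((E * σ0).trace).re) ^ 2 <
        (((E * ρ).trace).re - ((E * σ0).trace).re) ^ 2 := by
      rw [hEtr σ (hFdm σ hσ), hEtr ρ hρ, hm]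
      have ha0 : 0 ≤ 2 * δ * (f σ - f σ0) := by nlinarith
      have hab : 2 * δ * (f σ - f σ0) < 2 * δ * (f ρ - f σ0) := by nlinarith
      nlinarith
    exact mul_lt_mul_of_pos_right hsq hd

end
end

section
/- Let F be a nonempty closed convex set of density matrices on ℂ^n and let ρ be a density matrix with ρ ∉ F. Then there exists a positive semidefinite Hermitian matrix W such that Re Tr(Wσ) ≤ 1 for every σ ∈ F and Re Tr(Wρ) > 1. -/
open Matrix
open scoped Kronecker BigOperators ComplexOrder ENNReal EReal

noncomputable section

lemma psd_smul {n : ℕ} {M : Matrix (Fin n) (Fin n) ℂ} (hM : M.PosSemidef) {r : ℝ} (hr : 0 ≤ r) :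
    ((r : ℂ) • M).PosSemidef := by
  refine Matrix.PosSemidef.of_dotProduct_mulVec_nonneg ?_ ?_
  · have : ((r : ℂ) • M)ᴴ = (r : ℂ) • Mᴴ := by
      rw [conjTranspose_smul]; congr 1; simp
    rw [Matrix.IsHermitian, this, hM.1.eq]
  · intro x
    rw [smul_mulVec, dotProduct_smul, smul_eq_mul]
    exact mul_nonneg (Complex.zero_le_real.mpr hr) (hM.dotProduct_mulVec_nonneg x)

lemma herm_trace_eq {n : ℕ} (A X : Matrix (Fin n) (Fin n) ℂ) (hX : X.IsHermitian) :
    (((A + Aᴴ) * X).trace).re = 2 * ((A * X).trace).re := by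
  rw [Matrix.add_mul, Matrix.trace_add]
  have h1 : (Aᴴ * X).trace = star ((A * X).trace) := by
    conv_lhs => rw [← hX.eq]
    rw [← Matrix.conjTranspose_mul, Matrix.trace_conjTranspose, Matrix.trace_mul_comm]
  rw [h1]
  simp [Complex.add_re]
  ring

lemma repr_lemma {n : ℕ} (f : Matrix (Fin n) (Fin n) ℂ →L[ℝ] ℝ) :
    ∃ A : Matrix (Fin n) (Fin n) ℂ, ∀ X, ((A * X).trace).re = f X := by
  refine ⟨Matrix.of fun k l => (f (single l k 1) : ℂ)
      - Complex.I * (f (single l k Complex.I) : ℂ), fun X => ?_⟩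
  have key : ∀ (z : ℂ) (i j : Fin n), f (single i j z)
      = z.re * f (single i j (1:ℂ)) + z.im * f (single i j Complex.I) := by
    intro z i j
    have hz : single i j z
        = z.re • single i j (1:ℂ) + z.im • single i j Complex.I := by
      rw [smul_single, smul_single, ← single_add]
      simp [Complex.real_smul]
    rw [hz, map_add, f.map_smul, f.map_smul, smul_eq_mul, smul_eq_mul]
  have hRHS : f X = ∑ i : Fin n, ∑ j : Fin n,
      ((X i j).re * f (single i j (1:ℂ)) + (X i j).im * f (single i j Complex.I)) := by
    conv_lhs => rw [matrix_eq_sum_single X]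
    rw [map_sum]
    refine Finset.sum_congr rfl fun i _ => ?_
    rw [map_sum]
    exact Finset.sum_congr rfl fun j _ => key _ i j
  rw [hRHS]
  have hLHS : (((Matrix.of fun k l => (f (single l k 1) : ℂ)
      - Complex.I * (f (single l k Complex.I) : ℂ)) * X).trace).re
      = ∑ k : Fin n, ∑ l : Fin n,
        ((X l k).re * f (single l k (1:ℂ)) + (X l k).im * f (single l k Complex.I)) := by
    simp only [Matrix.trace, Matrix.diag, Matrix.mul_apply, Complex.re_sum, Matrix.of_apply]
    refine Finset.sum_congr rfl fun k _ => Finset.sum_congr rfl fun l _ => ?_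
    simp [Complex.sub_re, Complex.mul_re, Complex.mul_im]
    ring
  rw [hLHS, Finset.sum_comm]

lemma shift_psd {n : ℕ} (A : Matrix (Fin n) (Fin n) ℂ) (hA : A.IsHermitian) (c : ℝ)
    (hc : ∀ i, 0 ≤ hA.eigenvalues i + c) :
    (A + (c : ℂ) • 1).PosSemidef := by
  have hU := (Matrix.mem_unitaryGroup_iff).mp (hA.eigenvectorUnitary).2
  have hspec := hA.spectral_theorem
  have h1 : A + (c : ℂ) • 1
      = (hA.eigenvectorUnitary : Matrix (Fin n) (Fin n) ℂ)
        * diagonal (fun i => ((hA.eigenvalues i + c : ℝ) : ℂ))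
        * (hA.eigenvectorUnitary : Matrix (Fin n) (Fin n) ℂ)ᴴ := by
    have h2 : (c : ℂ) • (1 : Matrix (Fin n) (Fin n) ℂ)
        = (hA.eigenvectorUnitary : Matrix (Fin n) (Fin n) ℂ)
          * diagonal (fun _ => (c : ℂ))
          * star (hA.eigenvectorUnitary : Matrix (Fin n) (Fin n) ℂ) := by
      rw [show diagonal (fun _ : Fin n => (c : ℂ)) = (c : ℂ) • 1 by
        rw [Matrix.smul_one_eq_diagonal]]
      rw [Matrix.mul_smul, Matrix.smul_mul, Matrix.mul_one, hU]
    conv_lhs => rw [hspec, h2]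
    rw [Unitary.conjStarAlgAut_apply, Matrix.star_eq_conjTranspose, ← Matrix.add_mul, ← Matrix.mul_add, Matrix.diagonal_add]
    push_cast
    rfl
  rw [h1]
  exact (Matrix.PosSemidef.diagonal (fun i => by
    simpa using Complex.zero_le_real.mpr (hc i))).mul_mul_conjTranspose_same _


/-- hyperplane separation with a positive semidefinite witness:
if `ρ ∉ F` then some PSD matrix `W` satisfies `Re Tr(Wσ) ≤ 1` on `F` and `Re Tr(Wρ) > 1`. -/
theorem psd_witness_exists {n : ℕ}
    (F : Set (Matrix (Fin n) (Fin n) ℂ)) (hFne : F.Nonempty) (hFcl : IsClosed F)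
    (hFconv : Convex ℝ F) (hFdm : ∀ σ ∈ F, IsDensityMatrix σ)
    (ρ : Matrix (Fin n) (Fin n) ℂ) (hρ : IsDensityMatrix ρ) (hρF : ρ ∉ F) :
    ∃ W : Matrix (Fin n) (Fin n) ℂ, W.PosSemidef ∧
      (∀ σ ∈ F, ((W * σ).trace).re ≤ 1) ∧ 1 < ((W * ρ).trace).re := by
  haveI : LocallyConvexSpace ℝ (Matrix (Fin n) (Fin n) ℂ) :=
    (Pi.locallyConvexSpace : LocallyConvexSpace ℝ (Fin n → Fin n → ℂ))
  obtain ⟨f, u, hfu, huρ⟩ := geometric_hahn_banach_closed_point hFconv hFcl hρF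
  obtain ⟨A, hA⟩ := repr_lemma f
  -- Hermitian part (times 2)
  set B := A + Aᴴ with hB
  have hBh : B.IsHermitian := isHermitian_add_transpose_self A
  -- trace identity on Hermitian matrices
  have htr : ∀ X : Matrix (Fin n) (Fin n) ℂ, X.IsHermitian → ((B * X).trace).re = 2 * f X := by
    intro X hX
    rw [herm_trace_eq A X hX, hA X]
  -- constants
  set c : ℝ := (∑ i, |hBh.eigenvalues i|) + |2 * u| + 1 with hc
  have hsum_nonneg : 0 ≤ ∑ i, |hBh.eigenvalues i| :=
    Finset.sum_nonneg fun i _ => abs_nonneg _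
  have hce : ∀ i, 0 ≤ hBh.eigenvalues i + c := by
    intro i
    have h1 : |hBh.eigenvalues i| ≤ ∑ j, |hBh.eigenvalues j| :=
      Finset.single_le_sum (f := fun j => |hBh.eigenvalues j|)
        (fun j _ => abs_nonneg _) (Finset.mem_univ i)
    have h2 := neg_abs_le (hBh.eigenvalues i)
    have h3 := abs_nonneg (2 * u)
    simp only [hc]
    linarith
  set d : ℝ := 2 * u + c with hd
  have hdpos : 0 < d := by
    have := neg_abs_le (2 * u)
    simp only [hd, hc]
    linarith
  -- witness
  refine ⟨((d⁻¹ : ℝ) : ℂ) • (B + (c : ℂ) • 1), ?_, ?_, ?_⟩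
  · exact psd_smul (shift_psd B hBh c hce) (le_of_lt (inv_pos.mpr hdpos))
  · intro σ hσ
    have hσdm := hFdm σ hσ
    have hherm : σ.IsHermitian := hσdm.1.1
    have htrace : ((((d⁻¹ : ℝ) : ℂ) • (B + (c : ℂ) • 1) * σ).trace).re
        = d⁻¹ * (2 * f σ + c) := by
      rw [Matrix.smul_mul, Matrix.trace_smul, Matrix.add_mul, Matrix.trace_add,
        Matrix.smul_mul, Matrix.one_mul, Matrix.trace_smul, hσdm.2]
      simp only [smul_eq_mul, mul_one, Complex.mul_re, Complex.add_re, Complex.ofReal_re,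
        Complex.ofReal_im, Complex.add_im, Complex.mul_im]
      rw [htr σ hherm]
      ring
    rw [htrace]
    have hlt : f σ < u := hfu σ hσ
    rw [show (1:ℝ) = d⁻¹ * d by field_simp]
    apply mul_le_mul_of_nonneg_left _ (le_of_lt (inv_pos.mpr hdpos))
    simp only [hd]; linarith
  · have hherm : ρ.IsHermitian := hρ.1.1
    have htrace : ((((d⁻¹ : ℝ) : ℂ) • (B + (c : ℂ) • 1) * ρ).trace).re
        = d⁻¹ * (2 * f ρ + c) := by
      rw [Matrix.smul_mul, Matrix.trace_smul, Matrix.add_mul, Matrix.trace_add,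
        Matrix.smul_mul, Matrix.one_mul, Matrix.trace_smul, hρ.2]
      simp only [smul_eq_mul, mul_one, Complex.mul_re, Complex.add_re, Complex.ofReal_re,
        Complex.ofReal_im, Complex.add_im, Complex.mul_im]
      rw [htr ρ hherm]
      ring
    rw [htrace]
    rw [show (1:ℝ) = d⁻¹ * d by field_simp]
    apply mul_lt_mul_of_pos_left _ (inv_pos.mpr hdpos)
    simp only [hd]; linarith

end
end

section
/- Let F be a nonempty closed convex set of density matrices on ℂ^n and let ρ be a density matrix. Then the generalized robustness satisfies the duality R(ρ) = sup{ Re Tr(Wρ) − 1 : W an n×n positive semidefinite Hermitian matrix with Re Tr(Wσ) ≤ 1 for all σ ∈ F }, as an equality of values in [0, ∞]. -/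
open Matrix
open scoped Kronecker BigOperators ComplexOrder ENNReal EReal

noncomputable section

/-- The generalized robustness `R(ρ) = inf { λ ≥ 0 | ∃ density matrix ω,
(ρ + λω)/(1+λ) ∈ F }`, valued in `[0,∞]` with `inf ∅ = ∞`. -/
def genRobustness {n : ℕ} (F : Set (Matrix (Fin n) (Fin n) ℂ))
    (ρ : Matrix (Fin n) (Fin n) ℂ) : ℝ≥0∞ :=
  ⨅ (l : ℝ) (_ : 0 ≤ l)
    (_ : ∃ ω, IsDensityMatrix ω ∧
        (((1 + l : ℝ) : ℂ))⁻¹ • (ρ + (l : ℂ) • ω) ∈ F),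
    ENNReal.ofReal l

namespace RobAux
variable {n : ℕ}

instance : LocallyConvexSpace ℝ (Matrix (Fin n) (Fin n) ℂ) :=
  inferInstanceAs (LocallyConvexSpace ℝ (Fin n → Fin n → ℂ))

lemma coe_smul_mat (r : ℝ) (M : Matrix (Fin n) (Fin n) ℂ) : ((r : ℂ)) • M = r • M := by
  rw [← smul_one_smul ℂ r M, Complex.real_smul, mul_one]

lemma star_single (i : Fin n) (a : ℂ) :
    star (Pi.single i a : Fin n → ℂ) = Pi.single i (star a) := by
  ext k
  simp [Pi.star_apply, Pi.single_apply, apply_ite (star : ℂ → ℂ)]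

lemma trace_re_nonneg {A : Matrix (Fin n) (Fin n) ℂ} (hA : A.PosSemidef) :
    0 ≤ (A.trace).re := by
  have h : ∀ i, 0 ≤ (A i i).re := by
    intro i
    have h0 := hA.dotProduct_mulVec_nonneg (Pi.single i 1)
    rw [star_single, star_one, mulVec_single_one, Complex.le_def] at h0
    simpa using h0.1
  simp only [Matrix.trace, Matrix.diag, Complex.re_sum]
  exact Finset.sum_nonneg fun i _ => h i

open scoped MatrixOrder in
lemma trace_mul_re_nonneg {A B : Matrix (Fin n) (Fin n) ℂ}
    (hA : A.PosSemidef) (hB : B.PosSemidef) : 0 ≤ ((A * B).trace).re := by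
  classical
  have hB0 : 0 ≤ B := Matrix.nonneg_iff_posSemidef.mpr hB
  set S := CFC.sqrt B with hSdef
  have hS : Sᴴ = S := (Matrix.nonneg_iff_posSemidef.mp (CFC.sqrt_nonneg B)).1
  have h1 : (A * B).trace = (Sᴴ * A * S).trace := by
    rw [Matrix.trace_mul_cycle, hS, CFC.sqrt_mul_sqrt_self B hB0, Matrix.trace_mul_comm]
  rw [h1]
  exact trace_re_nonneg (hA.conjTranspose_mul_mul_same S)

lemma smul_real_posSemidef {A : Matrix (Fin n) (Fin n) ℂ} (hA : A.PosSemidef)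
    {a : ℝ} (ha : 0 ≤ a) : (a • A).PosSemidef := by
  rw [← coe_smul_mat]
  refine PosSemidef.of_dotProduct_mulVec_nonneg ?_ fun x => ?_
  · show ((a : ℂ) • A)ᴴ = _
    rw [conjTranspose_smul, Complex.star_def, Complex.conj_ofReal, hA.1.eq]
  · rw [smul_mulVec, dotProduct_smul, smul_eq_mul]
    exact mul_nonneg (Complex.zero_le_real.2 ha) (hA.dotProduct_mulVec_nonneg x)

lemma convex_density : Convex ℝ {ω : Matrix (Fin n) (Fin n) ℂ | IsDensityMatrix ω} := by
  intro x hx y hy a b ha hb hab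
  refine ⟨(smul_real_posSemidef hx.1 ha).add (smul_real_posSemidef hy.1 hb), ?_⟩
  rw [Matrix.trace_add, Matrix.trace_smul, Matrix.trace_smul, hx.2, hy.2]
  simp [Complex.real_smul]
  norm_cast

lemma diag_entries {ω : Matrix (Fin n) (Fin n) ℂ} (hω : IsDensityMatrix ω) (i : Fin n) :
    0 ≤ (ω i i).re ∧ (ω i i).im = 0 := by
  have h0 := hω.1.dotProduct_mulVec_nonneg (Pi.single i 1)
  rw [star_single, star_one, mulVec_single_one, Complex.le_def] at h0
  constructor
  · simpa using h0.1
  · simpa using h0.2.symm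

lemma diag_re_le_one {ω : Matrix (Fin n) (Fin n) ℂ} (hω : IsDensityMatrix ω) (i : Fin n) :
    (ω i i).re ≤ 1 := by
  have hs : ∑ k, (ω k k).re = 1 := by
    have := congrArg Complex.re hω.2
    simpa [Matrix.trace, Matrix.diag, Complex.re_sum] using this
  calc (ω i i).re ≤ ∑ k, (ω k k).re :=
        Finset.single_le_sum (fun k _ => (diag_entries hω k).1) (Finset.mem_univ i)
    _ = 1 := hs

lemma entry_norm_le_one {ω : Matrix (Fin n) (Fin n) ℂ} (hω : IsDensityMatrix ω) (i j : Fin n) :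
    ‖ω i j‖ ≤ 1 := by
  by_cases hij : i = j
  · subst hij
    have h1 := diag_entries hω i
    have : ω i i = ((ω i i).re : ℂ) := Complex.ext rfl (by simp [h1.2])
    rw [this, Complex.norm_real, Real.norm_eq_abs, abs_of_nonneg h1.1]
    exact diag_re_le_one hω i
  · set z := ω i j with hz
    by_cases h0 : z = 0
    · simp [← hz, h0]
    set r := ‖z‖ with hrdef
    have hr : 0 < r := norm_pos_iff.mpr h0
    set b : ℂ := -(star z) with hb
    set x : Fin n → ℂ := Pi.single i (r : ℂ) + Pi.single j b with hx
    have key := hω.1.dotProduct_mulVec_nonneg x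
    have hzz : z * star z = ((r:ℂ))^2 := by
      rw [Complex.star_def, Complex.mul_conj, Complex.normSq_eq_norm_sq]
      push_cast
      ring
    have hji : ω j i = star z := (hω.1.1.apply j i).symm
    have hQ : star x ⬝ᵥ ω *ᵥ x
        = (r:ℂ) * (ω i i * r) + (r:ℂ) * (ω i j * b)
          + (star b * (ω j i * (r:ℂ)) + star b * (ω j j * b)) := by
      rw [hx, star_add, star_single, star_single, Matrix.mulVec_add, mulVec_single, mulVec_single,
        add_dotProduct, dotProduct_add, dotProduct_add]
      simp only [single_dotProduct, Pi.smul_apply, col_apply, MulOpposite.smul_eq_mul_unop,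
        MulOpposite.unop_op, Complex.star_def, Complex.conj_ofReal]
    have hQ2 : star x ⬝ᵥ ω *ᵥ x
        = (r:ℂ)^2 * (ω i i + ω j j) - 2 * (r:ℂ)^3 := by
      rw [hQ, hji, hb]
      simp only [star_neg, star_star]
      linear_combination (ω j j - 2*(r:ℂ)) * hzz
    have key' : 0 ≤ (star x ⬝ᵥ ω *ᵥ x).re := by
      have := (Complex.le_def.mp key).1
      simpa using this
    have hre : (star x ⬝ᵥ ω *ᵥ x).re = r^2 * ((ω i i).re + (ω j j).re) - 2*r^3 := by
      rw [hQ2]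
      have hrw : (r:ℂ)^2 * (ω i i + ω j j) - 2*(r:ℂ)^3
          = ((r^2:ℝ):ℂ) * (ω i i + ω j j) - ((2*r^3:ℝ):ℂ) := by push_cast; ring
      rw [hrw]
      simp only [Complex.sub_re, Complex.mul_re, Complex.ofReal_re, Complex.ofReal_im,
        Complex.add_re, Complex.add_im]
      ring
    have hs : (ω i i).re + (ω j j).re ≤ 1 := by
      have hpair : (ω i i).re + (ω j j).re = ∑ k ∈ ({i, j} : Finset (Fin n)), (ω k k).re := by
        rw [Finset.sum_pair hij]
      have hsub : ∑ k ∈ ({i, j} : Finset (Fin n)), (ω k k).re ≤ ∑ k, (ω k k).re :=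
        Finset.sum_le_sum_of_subset_of_nonneg (Finset.subset_univ _)
          (fun k _ _ => (diag_entries hω k).1)
      have hone : ∑ k, (ω k k).re = 1 := by
        have := congrArg Complex.re hω.2
        simpa [Matrix.trace, Matrix.diag, Complex.re_sum] using this
      rw [hpair]
      rw [hone] at hsub
      exact hsub
    rw [hre] at key'
    show r ≤ 1
    nlinarith [hr, key', hs, sq_nonneg r]

lemma isClosed_density : IsClosed {ω : Matrix (Fin n) (Fin n) ℂ | IsDensityMatrix ω} := by
  have h1 : IsClosed {ω : Matrix (Fin n) (Fin n) ℂ | ω.PosSemidef} := by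
    have heq : {ω : Matrix (Fin n) (Fin n) ℂ | ω.PosSemidef}
        = {ω : Matrix (Fin n) (Fin n) ℂ | ωᴴ = ω}
          ∩ ⋂ x : Fin n → ℂ, {ω : Matrix (Fin n) (Fin n) ℂ | 0 ≤ star x ⬝ᵥ ω *ᵥ x} := by
      ext ω
      constructor
      · intro h
        exact ⟨h.1, Set.mem_iInter.mpr fun x => Matrix.PosSemidef.dotProduct_mulVec_nonneg h x⟩
      · intro ⟨h1, h2⟩
        exact PosSemidef.of_dotProduct_mulVec_nonneg h1 fun x => Set.mem_iInter.mp h2 x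
    rw [heq]
    refine IsClosed.inter ?_ (isClosed_iInter fun x => ?_)
    · exact isClosed_eq (continuous_id.matrix_conjTranspose) continuous_id
    · have hcont : Continuous fun ω : Matrix (Fin n) (Fin n) ℂ => star x ⬝ᵥ ω *ᵥ x :=
        (continuous_const).dotProduct (continuous_id.matrix_mulVec continuous_const)
      have hcl : IsClosed {z : ℂ | 0 ≤ z} := by
        have : {z : ℂ | 0 ≤ z} = Complex.re ⁻¹' (Set.Ici 0) ∩ Complex.im ⁻¹' {0} := by
          ext z
          simp [Complex.le_def, eq_comm]
        rw [this]
        exact (isClosed_Ici.preimage Complex.continuous_re).inter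
          (isClosed_singleton.preimage Complex.continuous_im)
      exact hcl.preimage hcont
  have h2 : IsClosed {ω : Matrix (Fin n) (Fin n) ℂ | ω.trace = 1} :=
    isClosed_eq (continuous_id.matrix_trace) continuous_const
  exact h1.inter h2

lemma isCompact_density : IsCompact {ω : Matrix (Fin n) (Fin n) ℂ | IsDensityMatrix ω} := by
  have hbox : IsCompact
      {M : Matrix (Fin n) (Fin n) ℂ | ∀ i j, M i j ∈ Metric.closedBall (0:ℂ) 1} := by
    have h2 : IsCompact (Set.univ.pi fun _ : Fin n =>
        (Set.univ.pi fun _ : Fin n => Metric.closedBall (0:ℂ) 1)) :=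
      isCompact_univ_pi fun _ => isCompact_univ_pi fun _ => isCompact_closedBall _ _
    have heq : {M : Matrix (Fin n) (Fin n) ℂ | ∀ i j, M i j ∈ Metric.closedBall (0:ℂ) 1}
        = ((Set.univ.pi fun _ : Fin n => Set.univ.pi fun _ : Fin n => Metric.closedBall (0:ℂ) 1) :
            Set (Matrix (Fin n) (Fin n) ℂ)) := by
      ext M
      exact ⟨fun h i _ j _ => h i j, fun h i j => h i (Set.mem_univ i) j (Set.mem_univ j)⟩
    rw [heq]
    exact h2
  refine hbox.of_isClosed_subset isClosed_density ?_
  intro ω hω i j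
  rw [Metric.mem_closedBall, dist_zero_right]
  exact entry_norm_le_one hω i j

/-- Splitting a complex scalar action into real actions. -/
lemma smul_split (z : ℂ) (M : Matrix (Fin n) (Fin n) ℂ) :
    z • M = z.re • M + z.im • (Complex.I • M) := by
  rw [← coe_smul_mat z.re, ← coe_smul_mat z.im, smul_smul, ← add_smul]
  congr 1
  exact (Complex.re_add_im z).symm

/-- The matrix representing a continuous real-linear functional. -/
def repMat (f : Matrix (Fin n) (Fin n) ℂ →L[ℝ] ℝ) : Matrix (Fin n) (Fin n) ℂ :=
  Matrix.of fun i j =>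
    ((f (single j i 1) : ℂ) - (f (Complex.I • single j i 1) : ℂ) * Complex.I)

lemma repMat_re (f : Matrix (Fin n) (Fin n) ℂ →L[ℝ] ℝ) (i j : Fin n) :
    (repMat f i j).re = f (single j i 1) := by
  simp [repMat]

lemma repMat_im (f : Matrix (Fin n) (Fin n) ℂ →L[ℝ] ℝ) (i j : Fin n) :
    (repMat f i j).im = -f (Complex.I • single j i 1) := by
  simp [repMat]

lemma trace_repMat_mul (f : Matrix (Fin n) (Fin n) ℂ →L[ℝ] ℝ) (X : Matrix (Fin n) (Fin n) ℂ) :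
    ((repMat f * X).trace).re = f X := by
  classical
  have hL : ((repMat f * X).trace).re
      = ∑ i, ∑ j, (f (single j i 1) * (X j i).re
          + f (Complex.I • single j i 1) * (X j i).im) := by
    have h1 : (repMat f * X).trace = ∑ i, ∑ j, repMat f i j * X j i := by
      simp [Matrix.trace, Matrix.diag, Matrix.mul_apply]
    rw [h1]
    rw [Complex.re_sum]
    refine Finset.sum_congr rfl fun i _ => ?_
    rw [Complex.re_sum]
    refine Finset.sum_congr rfl fun j _ => ?_
    rw [Complex.mul_re, repMat_re, repMat_im]
    ring
  have hR : f X = ∑ i, ∑ j, (f (single i j 1) * (X i j).re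
      + f (Complex.I • single i j 1) * (X i j).im) := by
    conv_lhs => rw [matrix_eq_sum_single X]
    rw [map_sum]
    refine Finset.sum_congr rfl fun i _ => ?_
    rw [map_sum]
    refine Finset.sum_congr rfl fun j _ => ?_
    have h2 : single i j (X i j) = (X i j) • single i j (1:ℂ) := by
      rw [smul_single, smul_eq_mul, mul_one]
    rw [h2, smul_split, map_add, f.map_smul, f.map_smul]
    simp [mul_comm]
  rw [hL, hR, Finset.sum_comm]

/-- Hermitian part. -/
def hermPart (B : Matrix (Fin n) (Fin n) ℂ) : Matrix (Fin n) (Fin n) ℂ :=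
  ((1:ℝ)/2) • (B + Bᴴ)

lemma hermPart_isHermitian (B : Matrix (Fin n) (Fin n) ℂ) : (hermPart B).IsHermitian := by
  show (hermPart B)ᴴ = hermPart B
  rw [hermPart, conjTranspose_smul, conjTranspose_add, conjTranspose_conjTranspose, add_comm,
    star_trivial]

lemma trace_hermPart_mul (f : Matrix (Fin n) (Fin n) ℂ →L[ℝ] ℝ)
    {X : Matrix (Fin n) (Fin n) ℂ} (hX : X.IsHermitian) :
    ((hermPart (repMat f) * X).trace).re = f X := by
  set B := repMat f with hB
  have h1 : (Bᴴ * X).trace = star ((B * X).trace) := by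
    calc (Bᴴ * X).trace = (Bᴴ * Xᴴ).trace := by rw [hX.eq]
      _ = ((X * B)ᴴ).trace := by rw [conjTranspose_mul]
      _ = star ((X * B).trace) := trace_conjTranspose _
      _ = star ((B * X).trace) := by rw [trace_mul_comm]
  have h2 : (hermPart B * X) = ((1:ℝ)/2) • (B * X + Bᴴ * X) := by
    rw [hermPart, smul_mul, add_mul]
  rw [h2, trace_smul, trace_add, h1]
  have h3 : ((B * X).trace + star ((B * X).trace)) = ((2 * ((B * X).trace).re : ℝ) : ℂ) := by
    rw [← Complex.add_conj]
    rfl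
  rw [h3]
  have h4 : ((1:ℝ)/2) • ((2 * ((B * X).trace).re : ℝ) : ℂ) = ((((B * X).trace).re : ℝ) : ℂ) := by
    rw [Complex.real_smul]
    push_cast
    ring
  rw [h4, Complex.ofReal_re]
  exact trace_repMat_mul f X

/-- For a Hermitian matrix, there is a real `m` and a density matrix attaining it such that
`A - m • 1` is PSD. -/
lemma exists_min_eigen (hn : 0 < n) {A : Matrix (Fin n) (Fin n) ℂ} (hA : A.IsHermitian) :
    ∃ (m : ℝ) (ω : Matrix (Fin n) (Fin n) ℂ), IsDensityMatrix ω ∧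
      (A * ω).trace = (m : ℂ) ∧ (A - (m : ℂ) • 1).PosSemidef := by
  classical
  have : Nonempty (Fin n) := Fin.pos_iff_nonempty.mp hn
  obtain ⟨i₀, -, hi₀⟩ := Finset.exists_min_image Finset.univ hA.eigenvalues
    ⟨Classical.arbitrary _, Finset.mem_univ _⟩
  set m := hA.eigenvalues i₀ with hm
  set v : Fin n → ℂ := (WithLp.equiv 2 (Fin n → ℂ)) (hA.eigenvectorBasis i₀) with hv
  have hvnorm : star v ⬝ᵥ v = 1 := by
    have h := (orthonormal_iff_ite.mp hA.eigenvectorBasis.orthonormal) i₀ i₀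
    rw [EuclideanSpace.inner_eq_star_dotProduct, dotProduct_comm] at h
    simpa [hv] using h
  have hAv : A *ᵥ v = m • v := hA.mulVec_eigenvectorBasis i₀
  set ω : Matrix (Fin n) (Fin n) ℂ := vecMulVec v (star v) with hω
  have hherm : ω.IsHermitian := by
    show ωᴴ = ω
    ext i j
    simp [hω, vecMulVec_apply, conjTranspose_apply, mul_comm]
  have hmv : ∀ x : Fin n → ℂ, ω *ᵥ x = (star v ⬝ᵥ x) • v := by
    intro x
    ext k
    simp only [hω, Matrix.mulVec, dotProduct, vecMulVec_apply, Pi.smul_apply,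
      smul_eq_mul, Finset.sum_mul, Finset.mul_sum]
    refine Finset.sum_congr rfl fun l _ => ?_
    ring
  have hpsd : ω.PosSemidef := by
    refine PosSemidef.of_dotProduct_mulVec_nonneg hherm fun x => ?_
    rw [hmv x, dotProduct_smul]
    have hsx : star x ⬝ᵥ v = star (star v ⬝ᵥ x) := by
      simp only [dotProduct, star_sum, star_mul', star_star, Pi.star_apply]
      refine Finset.sum_congr rfl fun l _ => mul_comm _ _
    rw [smul_eq_mul, hsx]
    exact mul_star_self_nonneg _
  have htr : ω.trace = 1 := by
    have h : ω.trace = star v ⬝ᵥ v := by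
      simp only [hω, Matrix.trace, Matrix.diag, vecMulVec_apply, dotProduct, Pi.star_apply]
      exact Finset.sum_congr rfl fun l _ => mul_comm _ _
    rw [h, hvnorm]
  have htrA : (A * ω).trace = (m : ℂ) := by
    have h1 : A * ω = vecMulVec (A *ᵥ v) (star v) := by
      ext i j
      simp only [hω, Matrix.mul_apply, vecMulVec_apply, Matrix.mulVec, dotProduct,
        Finset.sum_mul]
      exact Finset.sum_congr rfl fun l _ => by ring
    rw [h1, hAv]
    have h2 : (vecMulVec (m • v) (star v)).trace = (m : ℂ) * (star v ⬝ᵥ v) := by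
      simp only [Matrix.trace, Matrix.diag, vecMulVec_apply, Pi.smul_apply, dotProduct,
        Complex.real_smul, Finset.mul_sum, Pi.star_apply]
      exact Finset.sum_congr rfl fun l _ => by ring
    rw [h2, hvnorm, mul_one]
  have hsub : (A - (m : ℂ) • 1).PosSemidef := by
    set U : Matrix (Fin n) (Fin n) ℂ := (hA.eigenvectorUnitary : Matrix (Fin n) (Fin n) ℂ) with hU
    have hUU : U * star U = 1 := (Matrix.mem_unitaryGroup_iff).mp hA.eigenvectorUnitary.2
    have hdiagPSD : (Matrix.diagonal (fun i => ((hA.eigenvalues i - m : ℝ) : ℂ))).PosSemidef :=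
      posSemidef_diagonal_iff.mpr fun i =>
        Complex.zero_le_real.2 (by have := hi₀ i (Finset.mem_univ i); linarith)
    have key : A - (m : ℂ) • 1
        = U * Matrix.diagonal (fun i => ((hA.eigenvalues i - m : ℝ) : ℂ)) * Uᴴ := by
      have h1 : (m : ℂ) • (1 : Matrix (Fin n) (Fin n) ℂ)
          = U * Matrix.diagonal (fun _ => (m : ℂ)) * star U := by
        have : Matrix.diagonal (fun _ : Fin n => (m : ℂ)) = (m : ℂ) • 1 := by
          rw [Matrix.smul_one_eq_diagonal]
        rw [this, Matrix.mul_smul, Matrix.smul_mul, Matrix.mul_one, hUU]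
      have h2 : Matrix.diagonal (RCLike.ofReal ∘ hA.eigenvalues)
            - Matrix.diagonal (fun _ : Fin n => (m : ℂ))
          = Matrix.diagonal (fun i => ((hA.eigenvalues i - m : ℝ) : ℂ)) := by
        rw [Matrix.diagonal_sub]
        funext i
        push_cast
        rfl
      calc A - (m : ℂ) • 1
          = U * Matrix.diagonal (RCLike.ofReal ∘ hA.eigenvalues) * star U
            - U * Matrix.diagonal (fun _ => (m : ℂ)) * star U := by
            rw [← h1]
            conv_lhs => rw [hA.spectral_theorem]
            rfl
        _ = U * (Matrix.diagonal (RCLike.ofReal ∘ hA.eigenvalues)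
            - Matrix.diagonal (fun _ => (m : ℂ))) * star U := by
            rw [Matrix.mul_sub, Matrix.sub_mul]
        _ = U * Matrix.diagonal (fun i => ((hA.eigenvalues i - m : ℝ) : ℂ)) * Uᴴ := by
            rw [h2, Matrix.star_eq_conjTranspose]
    rw [key]
    exact hdiagPSD.mul_mul_conjTranspose_same U
  exact ⟨m, ω, ⟨hpsd, htr⟩, htrA, hsub⟩

end RobAux

open RobAux

/-- duality for the generalized robustness:
`R(ρ) = sup { Re Tr(Wρ) − 1 | W ⪰ 0, Re Tr(Wσ) ≤ 1 ∀ σ ∈ F }`, as values in `[0,∞]`. -/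
theorem genRobustness_duality {n : ℕ}
    (F : Set (Matrix (Fin n) (Fin n) ℂ)) (hFne : F.Nonempty) (hFcl : IsClosed F)
    (hFconv : Convex ℝ F) (hFdm : ∀ σ ∈ F, IsDensityMatrix σ)
    (ρ : Matrix (Fin n) (Fin n) ℂ) (hρ : IsDensityMatrix ρ) :
    genRobustness F ρ =
      ⨆ (W : Matrix (Fin n) (Fin n) ℂ)
        (_ : W.PosSemidef ∧ ∀ σ ∈ F, ((W * σ).trace).re ≤ 1),
        ENNReal.ofReal (((W * ρ).trace).re - 1) := by
  classical
  rcases Nat.eq_zero_or_pos n with rfl | hn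
  · exact absurd hρ.2 (by simp [Matrix.trace])
  apply le_antisymm
  · -- hard direction
    by_contra hcon
    rw [not_le] at hcon
    obtain ⟨a, haS, haR⟩ := exists_between hcon
    set r := a.toReal with hrdef
    have hane : a ≠ ⊤ := haR.ne_top
    have hr0 : 0 ≤ r := ENNReal.toReal_nonneg
    have ha : ENNReal.ofReal r = a := ENNReal.ofReal_toReal hane
    have h1r : (0:ℝ) < 1 + r := by linarith
    have hinfeas : ¬ ∃ ω, IsDensityMatrix ω ∧
        (((1 + r : ℝ) : ℂ))⁻¹ • (ρ + (r : ℂ) • ω) ∈ F := by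
      rintro ⟨ω, hω, hmem⟩
      have hle : genRobustness F ρ ≤ ENNReal.ofReal r := by
        unfold genRobustness
        exact iInf_le_of_le r (iInf_le_of_le hr0 (iInf_le_of_le ⟨ω, hω, hmem⟩ le_rfl))
      rw [ha] at hle
      exact absurd (lt_of_le_of_lt hle haR) (lt_irrefl _)
    set D := {ω : Matrix (Fin n) (Fin n) ℂ | IsDensityMatrix ω} with hD
    set g : Matrix (Fin n) (Fin n) ℂ → Matrix (Fin n) (Fin n) ℂ :=
      fun ω => (((1 + r : ℝ) : ℂ))⁻¹ • (ρ + (r : ℂ) • ω) with hg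
    set K := g '' D with hK
    have hKcomp : IsCompact K :=
      isCompact_density.image
        (by rw [hg]; fun_prop)
    have hKconv : Convex ℝ K := by
      rintro x ⟨ω₁, hω₁, rfl⟩ y ⟨ω₂, hω₂, rfl⟩ a' b' ha' hb' hab'
      refine ⟨a' • ω₁ + b' • ω₂, convex_density hω₁ hω₂ ha' hb' hab', ?_⟩
      have hρ1 : a' • ρ + b' • ρ = ρ := by rw [← add_smul, hab', one_smul]
      symm
      show a' • ((((1 + r : ℝ) : ℂ))⁻¹ • (ρ + (r : ℂ) • ω₁))
          + b' • ((((1 + r : ℝ) : ℂ))⁻¹ • (ρ + (r : ℂ) • ω₂))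
        = (((1 + r : ℝ) : ℂ))⁻¹ • (ρ + (r : ℂ) • (a' • ω₁ + b' • ω₂))
      rw [smul_comm a' ((((1 + r : ℝ) : ℂ))⁻¹), smul_comm b' ((((1 + r : ℝ) : ℂ))⁻¹), ← smul_add]
      congr 1
      rw [smul_add a', smul_add b', add_add_add_comm, hρ1]
      congr 1
      rw [smul_comm a' ((r : ℂ)), smul_comm b' ((r : ℂ)), ← smul_add]
    have hdisj : Disjoint F K := by
      rw [Set.disjoint_right]
      rintro x ⟨ω, hωD, rfl⟩ hxF
      exact hinfeas ⟨ω, hωD, hxF⟩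
    obtain ⟨f, u, v, hfF, huv, hfK⟩ :=
      geometric_hahn_banach_closed_compact hFconv hFcl hKconv hKcomp hdisj
    set Ah := hermPart (repMat f) with hAh
    have hAherm : Ah.IsHermitian := hermPart_isHermitian _
    obtain ⟨m, ω₀, hω₀, htrAω₀, hPSD⟩ := exists_min_eigen hn hAherm
    have hfω₀ : f ω₀ = m := by
      have := trace_hermPart_mul f hω₀.1.1
      rw [← hAh] at this
      rw [← this, htrAω₀, Complex.ofReal_re]
    -- trace formula for any hermitian σ with trace 1
    have htrform : ∀ σ : Matrix (Fin n) (Fin n) ℂ, σ.IsHermitian → σ.trace = 1 →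
        (((Ah - (m:ℂ) • 1) * σ).trace).re = f σ - m := by
      intro σ hσh hσt
      have h1 : (Ah - (m:ℂ) • 1) * σ = Ah * σ - (m:ℂ) • σ := by
        rw [Matrix.sub_mul, Matrix.smul_mul, Matrix.one_mul]
      rw [h1, Matrix.trace_sub, Matrix.trace_smul, hσt, smul_eq_mul, mul_one, Complex.sub_re,
        Complex.ofReal_re]
      congr 1
      exact trace_hermPart_mul f hσh
    -- m is below f on F
    obtain ⟨σ₀, hσ₀F⟩ := hFne
    have hσ₀dm := hFdm σ₀ hσ₀F
    have hmu : m < u := by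
      have h0 : 0 ≤ (((Ah - (m:ℂ) • 1) * σ₀).trace).re :=
        trace_mul_re_nonneg hPSD hσ₀dm.1
      rw [htrform σ₀ hσ₀dm.1.1 hσ₀dm.2] at h0
      have := hfF σ₀ hσ₀F
      linarith
    -- the K-point built from ω₀
    have hKpt : v < (1 + r)⁻¹ * (f ρ + r * m) := by
      have hmem : g ω₀ ∈ K := ⟨ω₀, hω₀, rfl⟩
      have h1 := hfK _ hmem
      have h2 : f (g ω₀) = (1 + r)⁻¹ * (f ρ + r * f ω₀) := by
        simp only [hg]
        rw [← Complex.ofReal_inv, coe_smul_mat, coe_smul_mat, f.map_smul, map_add, f.map_smul]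
        simp [smul_eq_mul]
      rw [h2, hfω₀] at h1
      exact h1
    have hfρgt : (1 + r) * (u - m) < f ρ - m := by
      have h3 : (1 + r) * v < f ρ + r * m := by
        have := mul_lt_mul_of_pos_left hKpt h1r
        rw [← mul_assoc, mul_inv_cancel₀ (ne_of_gt h1r), one_mul] at this
        exact this
      nlinarith [huv, h1r]
    set W := (u - m)⁻¹ • (Ah - (m:ℂ) • 1) with hW
    have hum : (0:ℝ) < u - m := by linarith
    have hWpsd : W.PosSemidef := smul_real_posSemidef hPSD (inv_nonneg.2 hum.le)
    have hWtr : ∀ σ : Matrix (Fin n) (Fin n) ℂ, σ.IsHermitian → σ.trace = 1 →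
        ((W * σ).trace).re = (u - m)⁻¹ * (f σ - m) := by
      intro σ hσh hσt
      rw [hW, Matrix.smul_mul, Matrix.trace_smul]
      rw [Complex.real_smul, Complex.mul_re, Complex.ofReal_re, Complex.ofReal_im]
      rw [htrform σ hσh hσt]
      ring
    have hWF : ∀ σ ∈ F, ((W * σ).trace).re ≤ 1 := by
      intro σ hσF
      have hσdm := hFdm σ hσF
      rw [hWtr σ hσdm.1.1 hσdm.2]
      have hfσ : f σ < u := hfF σ hσF
      calc (u - m)⁻¹ * (f σ - m) ≤ (u - m)⁻¹ * (u - m) :=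
            mul_le_mul_of_nonneg_left (by linarith) (inv_nonneg.2 hum.le)
        _ = 1 := inv_mul_cancel₀ (ne_of_gt hum)
    have hWρ : r ≤ ((W * ρ).trace).re - 1 := by
      rw [hWtr ρ hρ.1.1 hρ.2]
      have h4 : (1 + r) ≤ (u - m)⁻¹ * (f ρ - m) := by
        rw [inv_mul_eq_div, le_div_iff₀ hum]
        nlinarith
      linarith
    have hfin : a ≤ ⨆ (W : Matrix (Fin n) (Fin n) ℂ)
        (_ : W.PosSemidef ∧ ∀ σ ∈ F, ((W * σ).trace).re ≤ 1),
        ENNReal.ofReal (((W * ρ).trace).re - 1) := by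
      rw [← ha]
      refine le_trans (ENNReal.ofReal_le_ofReal hWρ) ?_
      exact le_iSup₂ (f := fun (W : Matrix (Fin n) (Fin n) ℂ)
        (_ : W.PosSemidef ∧ ∀ σ ∈ F, ((W * σ).trace).re ≤ 1) =>
          ENNReal.ofReal (((W * ρ).trace).re - 1)) W ⟨hWpsd, hWF⟩
    exact absurd (lt_of_le_of_lt hfin haS) (lt_irrefl _)
  · -- easy direction
    refine iSup₂_le fun W hW => ?_
    unfold genRobustness
    refine le_iInf fun l => le_iInf fun hl0 => le_iInf fun hfeas => ?_
    obtain ⟨ω, hω, hmem⟩ := hfeas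
    have h1l : (0:ℝ) < 1 + l := by linarith
    have hσle := hW.2 _ hmem
    set x := ((W * ρ).trace).re with hx
    set y := ((W * ω).trace).re with hy
    have hy0 : 0 ≤ y := trace_mul_re_nonneg hW.1 hω.1
    have htr : ((W * ((((1 + l : ℝ) : ℂ))⁻¹ • (ρ + (l : ℂ) • ω))).trace).re
        = (1 + l)⁻¹ * (x + l * y) := by
      rw [Matrix.mul_smul, Matrix.trace_smul, smul_eq_mul, ← Complex.ofReal_inv,
        Complex.mul_re, Complex.ofReal_re, Complex.ofReal_im]
      rw [Matrix.mul_add, Matrix.mul_smul, Matrix.trace_add, Matrix.trace_smul, smul_eq_mul]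
      simp only [Complex.add_re, Complex.mul_re, Complex.ofReal_re, Complex.ofReal_im]
      ring
    rw [htr] at hσle
    have hxle : x - 1 ≤ l := by
      have h5 := mul_le_mul_of_nonneg_left hσle h1l.le
      rw [← mul_assoc, mul_inv_cancel₀ (ne_of_gt h1l), one_mul, mul_one] at h5
      nlinarith
    exact ENNReal.ofReal_le_ofReal hxle

end
end

section
/- Let G be an n×n Hermitian matrix with largest and smallest eigenvalues λ_max and λ_min, and let F be a nonempty closed convex set of density matrices on ℂ^n. Define s* := sup{ 2 Re Tr[ (G ⊗ I − I ⊗ G)² X ] : X an n²×n² positive semidefinite matrix on ℂ^n ⊗ ℂ^n such that both partial traces of X are equal, Tr_A X = Tr_B X = σ, for some σ ∈ F }. Then: (i) for every σ ∈ F, 4( Re Tr(G²σ) − (Re Tr(Gσ))² ) ≤ s*; and (ii) if (λ_max − λ_min)² > s*, then there exists a unit vector ψ ∈ ℂ^n with 4( ⟨ψ, G²ψ⟩ − ⟨ψ, Gψ⟩² ) > s*. -/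
open Matrix
open scoped Kronecker BigOperators ComplexOrder ENNReal EReal

noncomputable section

/-- Partial trace over the first tensor factor. -/
def ptraceA {n : ℕ} (X : Matrix (Fin n × Fin n) (Fin n × Fin n) ℂ) :
    Matrix (Fin n) (Fin n) ℂ :=
  Matrix.of fun i j => ∑ k : Fin n, X (k, i) (k, j)

/-- Partial trace over the second tensor factor. -/
def ptraceB {n : ℕ} (X : Matrix (Fin n × Fin n) (Fin n × Fin n) ℂ) :
    Matrix (Fin n) (Fin n) ℂ :=
  Matrix.of fun i j => ∑ k : Fin n, X (i, k) (j, k)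


section AuxLemmas

lemma quad_expand {N : Type*} [Fintype N] [DecidableEq N] (X : Matrix (N) (N) ℂ) (i j : N) (c : ℂ) :
    star (Pi.single i 1 + Pi.single j c) ⬝ᵥ X *ᵥ (Pi.single i 1 + Pi.single j c) =
      X i i + c * X i j + (starRingEnd ℂ) c * X j i + (starRingEnd ℂ) c * c * X j j := by
  have h1 : X *ᵥ (Pi.single i 1 + Pi.single j c) = fun p => X p i + X p j * c := by
    funext p
    simp [mulVec, dotProduct, Pi.single_apply, mul_add, Finset.sum_add_distrib, mul_ite,
      Finset.sum_ite_eq', mul_comm]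
  rw [h1]
  have h2 : star (Pi.single i (1:ℂ) + Pi.single j c) =
      (Pi.single i (1:ℂ) : N → ℂ) + Pi.single j ((starRingEnd ℂ) c) := by
    funext p
    simp only [Pi.star_apply, Pi.add_apply, Pi.single_apply]
    split_ifs <;> simp [Complex.star_def]
  rw [h2]
  simp [dotProduct, Pi.single_apply, ite_mul, add_mul, Finset.sum_add_distrib,
    Finset.sum_ite_eq']
  ring

lemma psd_diag_re_nonneg {N : Type*} [Fintype N] [DecidableEq N] {X : Matrix (N) (N) ℂ} (hX : X.PosSemidef) (i : N) :
    0 ≤ (X i i).re := by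
  have h := hX.dotProduct_mulVec_nonneg (Pi.single i 1)
  simp [dotProduct, mulVec, Pi.single_apply] at h
  rw [Complex.le_def] at h
  simpa using h.1

lemma psd_diag_im_zero {N : Type*} [Fintype N] [DecidableEq N] {X : Matrix (N) (N) ℂ} (hX : X.PosSemidef) (i : N) :
    (X i i).im = 0 := by
  have h := hX.dotProduct_mulVec_nonneg (Pi.single i 1)
  simp [dotProduct, mulVec, Pi.single_apply] at h
  rw [Complex.le_def] at h
  simp at h
  exact h.2.symm

lemma trace_re_eq_sum {N : Type*} [Fintype N] [DecidableEq N] (X : Matrix (N) (N) ℂ) :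
    X.trace.re = ∑ k, (X k k).re := by
  simp [Matrix.trace, Matrix.diag, Complex.re_sum]

lemma psd_entry_abs_le_trace {N : Type*} [Fintype N] [DecidableEq N] {X : Matrix (N) (N) ℂ} (hX : X.PosSemidef)
    (i j : N) : ‖X i j‖ ≤ X.trace.re := by
  have htr := trace_re_eq_sum X
  rcases eq_or_ne i j with rfl | hij
  · have : ‖X i i‖ = (X i i).re := by
      rw [Complex.norm_def, Complex.normSq_apply, psd_diag_im_zero hX i]
      simpa using Real.sqrt_mul_self (psd_diag_re_nonneg hX i)
    rw [this, htr]
    exact Finset.single_le_sum (fun k _ => psd_diag_re_nonneg hX k) (Finset.mem_univ i)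
  · rcases eq_or_ne (X i j) 0 with h0 | h0
    · rw [h0]
      simp only [norm_zero, htr]
      exact Finset.sum_nonneg fun k _ => psd_diag_re_nonneg hX k
    · set c : ℂ := -(((‖X i j‖ : ℝ)) : ℂ) / X i j with hc
      have habs : (((‖X i j‖ : ℝ)) : ℂ) ≠ 0 := by simpa using h0
      have hcX : c * X i j = -(((‖X i j‖ : ℝ)) : ℂ) := by rw [hc, div_mul_cancel₀ _ h0]
      have hcc : (starRingEnd ℂ) c * c = 1 := by
        rw [hc, map_div₀, map_neg]
        simp only [Complex.conj_ofReal]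
        rw [div_mul_div_comm, neg_mul_neg]
        rw [mul_comm ((starRingEnd ℂ) (X i j)), Complex.mul_conj, Complex.normSq_eq_norm_sq]
        push_cast
        rw [← sq, div_self (pow_ne_zero 2 habs)]
      have key := hX.dotProduct_mulVec_nonneg (Pi.single i 1 + Pi.single j c)
      rw [quad_expand] at key
      have hji : X j i = (starRingEnd ℂ) (X i j) := by
        have := congrFun (congrFun hX.1.symm j) i
        simpa [conjTranspose_apply] using this
      have hterm : (starRingEnd ℂ) c * X j i = -(((‖X i j‖ : ℝ)) : ℂ) := by
        rw [hji, ← RingHom.map_mul, hcX]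
        simp
      rw [hcX, hterm, hcc, one_mul] at key
      rw [Complex.le_def] at key
      have hre := key.1
      simp only [Complex.add_re, Complex.neg_re, Complex.ofReal_re, Complex.zero_re] at hre
      have hsum : (X i i).re + (X j j).re ≤ X.trace.re := by
        rw [htr]
        have := Finset.sum_pair (f := fun k => (X k k).re) hij
        rw [← this]
        exact Finset.sum_le_sum_of_subset_of_nonneg (Finset.subset_univ _)
          (fun k _ _ => psd_diag_re_nonneg hX k)
      nlinarith [norm_nonneg (X i j), psd_diag_re_nonneg hX i, psd_diag_re_nonneg hX j]

lemma trace_mul_re_le_of_psd {N : Type*} [Fintype N] [DecidableEq N] (M : Matrix (N) (N) ℂ)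
    {X : Matrix (N) (N) ℂ} (hX : X.PosSemidef) (ht : X.trace = 1) :
    ((M * X).trace).re ≤ ∑ i, ∑ j, ‖M i j‖ := by
  have hentry : ∀ i j, ‖X i j‖ ≤ 1 := by
    intro i j
    have := psd_entry_abs_le_trace hX i j
    rwa [ht] at this
  calc ((M * X).trace).re ≤ ‖(M * X).trace‖ := Complex.re_le_norm _
    _ ≤ ∑ i, ‖(M * X) i i‖ := by
        rw [Matrix.trace]
        exact (norm_sum_le _ _)
    _ ≤ ∑ i, ∑ j, ‖M i j‖ := by
        apply Finset.sum_le_sum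
        intro i _
        calc ‖(M * X) i i‖ ≤ ∑ j, ‖M i j * X j i‖ := by
              rw [Matrix.mul_apply]
              exact norm_sum_le _ _
          _ ≤ ∑ j, ‖M i j‖ := by
              apply Finset.sum_le_sum
              intro j _
              rw [norm_mul]
              nth_rewrite 2 [← mul_one (‖M i j‖)]
              exact mul_le_mul_of_nonneg_left (hentry j i) (norm_nonneg _)

lemma trace_mul_re_nonneg_of_psd {N : Type*} [Fintype N] [DecidableEq N] {H X : Matrix (N) (N) ℂ}
    (hH : H.IsHermitian) (hX : X.PosSemidef) : 0 ≤ ((H ^ 2 * X).trace).re := by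
  have h1 : (H * X * Hᴴ).trace = (H ^ 2 * X).trace := by
    rw [trace_mul_cycle, hH.eq, ← pow_two]
  rw [← h1]
  rw [trace_re_eq_sum]
  exact Finset.sum_nonneg fun k _ => psd_diag_re_nonneg (hX.mul_mul_conjTranspose_same H) k


lemma conjTranspose_kron {N : Type*} [Fintype N] (A B : Matrix N N ℂ) :
    (A ⊗ₖ B)ᴴ = Aᴴ ⊗ₖ Bᴴ := by
  ext ⟨i,j⟩ ⟨k,l⟩
  simp [conjTranspose_apply, mul_comm]

lemma kron_posSemidef {N : Type*} [Fintype N] [DecidableEq N] {A B : Matrix N N ℂ}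
    (hA : A.PosSemidef) (hB : B.PosSemidef) : (A ⊗ₖ B).PosSemidef := by
  exact hA.kronecker hB

lemma kron_herm {N : Type*} [Fintype N] [DecidableEq N] {G : Matrix N N ℂ}
    (hG : G.IsHermitian) :
    (G ⊗ₖ (1 : Matrix N N ℂ) - (1 : Matrix N N ℂ) ⊗ₖ G).IsHermitian := by
  unfold Matrix.IsHermitian
  rw [conjTranspose_sub, conjTranspose_kron, conjTranspose_kron, conjTranspose_one, hG.eq]

lemma trace_real {N : Type*} [Fintype N] {G σ : Matrix N N ℂ}
    (hG : G.IsHermitian) (hσ : σ.IsHermitian) :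
    ((G * σ).trace : ℂ) = (((G * σ).trace).re : ℝ) := by
  have h : (starRingEnd ℂ) ((G * σ).trace) = (G * σ).trace := by
    have h1 : star ((G * σ).trace) = ((G * σ)ᴴ).trace := (trace_conjTranspose _).symm
    rw [Complex.star_def] at h1
    rw [h1, conjTranspose_mul, hσ.eq, hG.eq, trace_mul_comm]
  exact (Complex.conj_eq_iff_re.mp h).symm

lemma sq_kron_expand {N : Type*} [Fintype N] [DecidableEq N] (G : Matrix N N ℂ) :
    (G ⊗ₖ (1 : Matrix N N ℂ) - (1 : Matrix N N ℂ) ⊗ₖ G) ^ 2 =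
      (G ^ 2) ⊗ₖ (1 : Matrix N N ℂ) - G ⊗ₖ G - G ⊗ₖ G + (1 : Matrix N N ℂ) ⊗ₖ (G ^ 2) := by
  rw [pow_two, sub_mul, mul_sub, mul_sub, ← mul_kronecker_mul, ← mul_kronecker_mul,
    ← mul_kronecker_mul, ← mul_kronecker_mul]
  simp only [mul_one, one_mul, ← pow_two, one_pow]
  abel

lemma value_eq {N : Type*} [Fintype N] [DecidableEq N] (G σ : Matrix N N ℂ)
    (hσ1 : σ.trace = 1) :
    (((G ⊗ₖ (1 : Matrix N N ℂ) - (1 : Matrix N N ℂ) ⊗ₖ G) ^ 2) * (σ ⊗ₖ σ)).trace =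
      2 * (G ^ 2 * σ).trace - 2 * ((G * σ).trace) ^ 2 := by
  rw [sq_kron_expand, add_mul, sub_mul, sub_mul, trace_add, trace_sub, trace_sub,
    ← mul_kronecker_mul, ← mul_kronecker_mul, ← mul_kronecker_mul]
  simp only [one_mul, trace_kronecker, hσ1]
  ring

-- partial traces of kron
lemma ptA {N : Type*} [Fintype N] (A B : Matrix N N ℂ) (i j : N) :
    (∑ k : N, (A ⊗ₖ B) (k, i) (k, j)) = A.trace * B i j := by
  simp [Matrix.trace, Matrix.diag, Finset.sum_mul]

lemma pure_state_variance {n : ℕ} (G : Matrix (Fin n) (Fin n) ℂ) (hG : G.IsHermitian)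
    (p q : Fin n) (hpq : p ≠ q) :
    ∃ ψ : Fin n → ℂ, star ψ ⬝ᵥ ψ = 1 ∧
      4 * ((star ψ ⬝ᵥ ((G ^ 2) *ᵥ ψ)).re - ((star ψ ⬝ᵥ (G *ᵥ ψ)).re) ^ 2) =
        (hG.eigenvalues p - hG.eigenvalues q) ^ 2 := by
  set u : Fin n → ℂ := ⇑(hG.eigenvectorBasis p) with hu
  set v : Fin n → ℂ := ⇑(hG.eigenvectorBasis q) with hv
  set a : ℝ := hG.eigenvalues p
  set b : ℝ := hG.eigenvalues q
  have horth := orthonormal_iff_ite.mp hG.eigenvectorBasis.orthonormal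
  have huu : star u ⬝ᵥ u = 1 := by
    have := horth p p
    rw [EuclideanSpace.inner_eq_star_dotProduct, dotProduct_comm] at this
    simpa [hu] using this
  have hvv : star v ⬝ᵥ v = 1 := by
    have := horth q q
    rw [EuclideanSpace.inner_eq_star_dotProduct, dotProduct_comm] at this
    simpa [hv] using this
  have huv : star u ⬝ᵥ v = 0 := by
    have := horth p q
    rw [EuclideanSpace.inner_eq_star_dotProduct, dotProduct_comm] at this
    simpa [hu, hv, hpq] using this
  have hvu : star v ⬝ᵥ u = 0 := by
    have := horth q p
    rw [EuclideanSpace.inner_eq_star_dotProduct, dotProduct_comm] at this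
    simpa [hu, hv, hpq.symm] using this
  have hGu : G *ᵥ u = ((a : ℂ)) • u := by
    rw [hu, hG.mulVec_eigenvectorBasis p]
    funext i
    simp [Complex.real_smul]
    exact Or.inl rfl
  have hGv : G *ᵥ v = ((b : ℂ)) • v := by
    rw [hv, hG.mulVec_eigenvectorBasis q]
    funext i
    simp [Complex.real_smul]
    exact Or.inl rfl
  have hG2u : G ^ 2 *ᵥ u = ((a : ℂ) ^ 2) • u := by
    rw [pow_two, ← mulVec_mulVec, hGu, mulVec_smul, hGu, smul_smul, ← pow_two]
  have hG2v : G ^ 2 *ᵥ v = ((b : ℂ) ^ 2) • v := by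
    rw [pow_two, ← mulVec_mulVec, hGv, mulVec_smul, hGv, smul_smul, ← pow_two]
  set s : ℂ := (((Real.sqrt 2 : ℝ) : ℂ))⁻¹ with hs
  have hstars : star s = s := by
    rw [hs]
    simp [← Complex.ofReal_inv, Complex.star_def, Complex.conj_ofReal]
  have hss : s * s = (2 : ℂ)⁻¹ := by
    rw [hs, ← mul_inv]
    rw [← Complex.ofReal_mul, Real.mul_self_sqrt (by norm_num)]
    norm_num
  refine ⟨s • (u + v), ?_, ?_⟩
  · rw [star_smul, hstars, smul_dotProduct, dotProduct_smul, star_add, add_dotProduct,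
      dotProduct_add, dotProduct_add, huu, hvv, huv, hvu, smul_eq_mul, smul_eq_mul, ← mul_assoc,
      hss]
    norm_num
  · have hd1 : star (s • (u + v)) ⬝ᵥ (G *ᵥ (s • (u + v))) = (((a + b) / 2 : ℝ) : ℂ) := by
      rw [mulVec_smul, mulVec_add, hGu, hGv, star_smul, hstars, smul_dotProduct,
        dotProduct_smul, smul_eq_mul, smul_eq_mul, ← mul_assoc, hss, star_add, add_dotProduct,
        dotProduct_add, dotProduct_add, dotProduct_smul, dotProduct_smul, dotProduct_smul,
        dotProduct_smul, huu, hvv, huv, hvu]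
      push_cast
      simp only [smul_eq_mul]
      ring
    have hd2 : star (s • (u + v)) ⬝ᵥ ((G ^ 2) *ᵥ (s • (u + v))) =
        (((a ^ 2 + b ^ 2) / 2 : ℝ) : ℂ) := by
      rw [mulVec_smul, mulVec_add, hG2u, hG2v, star_smul, hstars, smul_dotProduct,
        dotProduct_smul, smul_eq_mul, smul_eq_mul, ← mul_assoc, hss, star_add, add_dotProduct,
        dotProduct_add, dotProduct_add, dotProduct_smul, dotProduct_smul, dotProduct_smul,
        dotProduct_smul, huu, hvv, huv, hvu]
      push_cast
      simp only [smul_eq_mul]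
      ring
    rw [hd1, hd2, Complex.ofReal_re, Complex.ofReal_re]
    ring


lemma ptraceA_kron {n : ℕ} (A B : Matrix (Fin n) (Fin n) ℂ) :
    ptraceA (A ⊗ₖ B) = A.trace • B := by
  ext i j
  simp [ptraceA, Matrix.trace, Matrix.diag, Finset.sum_mul, smul_eq_mul]

lemma ptraceB_kron {n : ℕ} (A B : Matrix (Fin n) (Fin n) ℂ) :
    ptraceB (A ⊗ₖ B) = B.trace • A := by
  ext i j
  simp [ptraceB, Matrix.trace, Matrix.diag, Finset.mul_sum, smul_eq_mul, mul_comm]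

lemma trace_ptraceA {n : ℕ} (X : Matrix (Fin n × Fin n) (Fin n × Fin n) ℂ) :
    (ptraceA X).trace = X.trace := by
  rw [Matrix.trace, Matrix.trace]
  simp only [ptraceA, Matrix.diag, Matrix.of_apply, Fintype.sum_prod_type]
  exact Finset.sum_comm

end AuxLemmas

/-- Theorem 4 of the paper: with
`s* = sup { 2 Re Tr[(G⊗I − I⊗G)² X] | X ⪰ 0, Tr_A X = Tr_B X = σ ∈ F }`,
(i) every free state has quantum Fisher information (bounded by 4·variance) at most `s*`;
(ii) if `(λmax − λmin)² > s*` then some pure state beats `s*`. -/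
theorem unitary_encoding_criterion {n : ℕ}
    (G : Matrix (Fin n) (Fin n) ℂ) (hG : G.IsHermitian)
    (lmax lmin : ℝ)
    (hmax : IsGreatest (Set.range hG.eigenvalues) lmax)
    (hmin : IsLeast (Set.range hG.eigenvalues) lmin)
    (F : Set (Matrix (Fin n) (Fin n) ℂ)) (hFne : F.Nonempty) (hFcl : IsClosed F)
    (hFconv : Convex ℝ F) (hFdm : ∀ σ ∈ F, IsDensityMatrix σ) :
    (∀ σ ∈ F,
        4 * (((G ^ 2 * σ).trace).re - (((G * σ).trace).re) ^ 2) ≤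
          sSup { x : ℝ |
            ∃ X : Matrix (Fin n × Fin n) (Fin n × Fin n) ℂ, X.PosSemidef ∧
              (∃ σ' ∈ F, ptraceA X = σ' ∧ ptraceB X = σ') ∧
              x = 2 * ((((G ⊗ₖ (1 : Matrix (Fin n) (Fin n) ℂ) -
                    (1 : Matrix (Fin n) (Fin n) ℂ) ⊗ₖ G) ^ 2) * X).trace).re }) ∧
      ((lmax - lmin) ^ 2 >
          sSup { x : ℝ |
            ∃ X : Matrix (Fin n × Fin n) (Fin n × Fin n) ℂ, X.PosSemidef ∧
              (∃ σ' ∈ F, ptraceA X = σ' ∧ ptraceB X = σ') ∧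
              x = 2 * ((((G ⊗ₖ (1 : Matrix (Fin n) (Fin n) ℂ) -
                    (1 : Matrix (Fin n) (Fin n) ℂ) ⊗ₖ G) ^ 2) * X).trace).re } →
        ∃ ψ : Fin n → ℂ, star ψ ⬝ᵥ ψ = 1 ∧
          sSup { x : ℝ |
            ∃ X : Matrix (Fin n × Fin n) (Fin n × Fin n) ℂ, X.PosSemidef ∧
              (∃ σ' ∈ F, ptraceA X = σ' ∧ ptraceB X = σ') ∧
              x = 2 * ((((G ⊗ₖ (1 : Matrix (Fin n) (Fin n) ℂ) -
                    (1 : Matrix (Fin n) (Fin n) ℂ) ⊗ₖ G) ^ 2) * X).trace).re } <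
            4 * ((star ψ ⬝ᵥ ((G ^ 2) *ᵥ ψ)).re - ((star ψ ⬝ᵥ (G *ᵥ ψ)).re) ^ 2)) := by
  set H : Matrix (Fin n × Fin n) (Fin n × Fin n) ℂ :=
    G ⊗ₖ (1 : Matrix (Fin n) (Fin n) ℂ) - (1 : Matrix (Fin n) (Fin n) ℂ) ⊗ₖ G with hH
  set S : Set ℝ := { x : ℝ |
      ∃ X : Matrix (Fin n × Fin n) (Fin n × Fin n) ℂ, X.PosSemidef ∧
        (∃ σ' ∈ F, ptraceA X = σ' ∧ ptraceB X = σ') ∧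
        x = 2 * (((H ^ 2) * X).trace).re } with hS
  -- membership of the canonical witness
  have hmem : ∀ σ ∈ F, (2 * (((H ^ 2) * (σ ⊗ₖ σ)).trace).re) ∈ S := by
    intro σ hσ
    obtain ⟨hpsd, htr⟩ := hFdm σ hσ
    refine ⟨σ ⊗ₖ σ, kron_posSemidef hpsd hpsd, ⟨σ, hσ, ?_, ?_⟩, rfl⟩
    · rw [ptraceA_kron, htr, one_smul]
    · rw [ptraceB_kron, htr, one_smul]
  -- boundedness
  have hBdd : BddAbove S := by
    refine ⟨2 * ∑ p : Fin n × Fin n, ∑ q : Fin n × Fin n, ‖(H ^ 2) p q‖, ?_⟩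
    rintro x ⟨X, hXpsd, ⟨σ', hσ'F, hA, hB⟩, rfl⟩
    have hXtr : X.trace = 1 := by
      rw [← trace_ptraceA X, hA, (hFdm σ' hσ'F).2]
    have := trace_mul_re_le_of_psd (H ^ 2) hXpsd hXtr
    linarith
  -- the value of the witness
  have hval : ∀ σ ∈ F, 2 * (((H ^ 2) * (σ ⊗ₖ σ)).trace).re =
      4 * (((G ^ 2 * σ).trace).re - (((G * σ).trace).re) ^ 2) := by
    intro σ hσ
    obtain ⟨hpsd, htr⟩ := hFdm σ hσ
    rw [hH, value_eq G σ htr]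
    have hT1 : (G * σ).trace = ((((G * σ).trace).re : ℝ) : ℂ) := trace_real hG hpsd.1
    rw [hT1]
    set r : ℝ := ((G * σ).trace).re
    set T2 : ℂ := (G ^ 2 * σ).trace
    have : ((2 : ℂ) * T2 - 2 * ((r : ℂ)) ^ 2).re = 2 * T2.re - 2 * r ^ 2 := by
      have hcast : ((r : ℂ)) ^ 2 = (((r ^ 2 : ℝ)) : ℂ) := by norm_cast
      rw [hcast]
      simp only [Complex.sub_re, Complex.mul_re, Complex.ofReal_re, Complex.ofReal_im,
        Complex.re_ofNat, Complex.im_ofNat]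
      ring
    rw [this]
    simp
    ring
  constructor
  · intro σ hσ
    rw [← hval σ hσ]
    exact le_csSup hBdd (hmem σ hσ)
  · intro hgt
    obtain ⟨p, hp⟩ := hmax.1
    obtain ⟨q, hq⟩ := hmin.1
    by_cases hml : lmax = lmin
    · exfalso
      obtain ⟨σ, hσ⟩ := hFne
      obtain ⟨hpsd, htr⟩ := hFdm σ hσ
      have h0 : (0 : ℝ) ≤ 2 * (((H ^ 2) * (σ ⊗ₖ σ)).trace).re := by
        have := trace_mul_re_nonneg_of_psd (kron_herm hG) (kron_posSemidef hpsd hpsd)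
        linarith
      have h1 := le_csSup hBdd (hmem σ hσ)
      rw [hml] at hgt
      simp at hgt
      linarith
    · have hpq : p ≠ q := by
        intro h
        rw [h, hq] at hp
        exact hml hp.symm
      obtain ⟨ψ, hψ1, hψ2⟩ := pure_state_variance G hG p q hpq
      refine ⟨ψ, hψ1, ?_⟩
      rw [hψ2, hp, hq]
      exact hgt

end
end

section
/- Let G be an n×n Hermitian matrix with largest eigenvalue λ_max and smallest eigenvalue λ_min. Then sup over unit vectors ψ ∈ ℂ^n of 4( ⟨ψ, G²ψ⟩ − ⟨ψ, Gψ⟩² ) equals (λ_max − λ_min)², and the supremum is attained at ψ = (u + v)/√2 where u and v are orthonormal eigenvectors of G for λ_max and λ_min respectively. -/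
open Matrix
open scoped Kronecker BigOperators ComplexOrder ENNReal EReal

noncomputable section


lemma diag_expect {n : ℕ} (μ : Fin n → ℝ) (φ : Fin n → ℂ) :
    (star φ ⬝ᵥ ((diagonal (fun i => (μ i : ℂ))) *ᵥ φ)).re
      = ∑ i, μ i * ‖φ i‖ ^ 2 := by
  simp only [dotProduct, mulVec_diagonal, Pi.star_apply, Complex.re_sum]
  refine Finset.sum_congr rfl fun i _ => ?_
  have h : star (φ i) * ((μ i : ℂ) * φ i)
      = (μ i : ℂ) * (Complex.normSq (φ i) : ℂ) := by
    rw [← Complex.mul_conj, Complex.star_def]; ring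
  rw [h, ← Complex.ofReal_mul, Complex.ofReal_re, Complex.normSq_eq_norm_sq]

lemma combo_expect {n : ℕ} (A : Matrix (Fin n) (Fin n) ℂ) (α β : ℝ)
    (u v : Fin n → ℂ)
    (hu : A *ᵥ u = (α : ℂ) • u) (hv : A *ᵥ v = (β : ℂ) • v)
    (hun : star u ⬝ᵥ u = 1) (hvn : star v ⬝ᵥ v = 1)
    (huv : star u ⬝ᵥ v = 0) (hvu : star v ⬝ᵥ u = 0) :
    star (((Real.sqrt 2 : ℂ))⁻¹ • (u + v)) ⬝ᵥ
      (A *ᵥ (((Real.sqrt 2 : ℂ))⁻¹ • (u + v))) = (((α + β) / 2 : ℝ) : ℂ) := by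
  have hc : ((Real.sqrt 2 : ℂ))⁻¹ * ((Real.sqrt 2 : ℂ))⁻¹ = 1/2 := by
    rw [← mul_inv, ← Complex.ofReal_mul,
      Real.mul_self_sqrt (by norm_num : (0:ℝ) ≤ 2)]
    norm_num
  have hstar : star (((Real.sqrt 2 : ℂ))⁻¹ • (u + v))
      = ((Real.sqrt 2 : ℂ))⁻¹ • (star u + star v) := by
    simp [star_smul, Complex.star_def, ← Complex.ofReal_inv, Complex.conj_ofReal]
  rw [mulVec_smul, mulVec_add, hu, hv, hstar]
  simp only [smul_dotProduct, dotProduct_smul, add_dotProduct, dotProduct_add,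
    dotProduct_smul, smul_eq_mul]
  rw [hun, hvn, huv, hvu]
  push_cast
  linear_combination ((α : ℂ) + β) * hc


lemma upper_bound {n : ℕ} (G : Matrix (Fin n) (Fin n) ℂ) (hG : G.IsHermitian)
    (lmax lmin : ℝ)
    (hmax : ∀ i, hG.eigenvalues i ≤ lmax) (hmin : ∀ i, lmin ≤ hG.eigenvalues i)
    (ψ : Fin n → ℂ) (hψ : star ψ ⬝ᵥ ψ = 1) :
    4 * ((star ψ ⬝ᵥ ((G ^ 2) *ᵥ ψ)).re - ((star ψ ⬝ᵥ (G *ᵥ ψ)).re) ^ 2)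
      ≤ (lmax - lmin) ^ 2 := by
  set U : Matrix (Fin n) (Fin n) ℂ := (hG.eigenvectorUnitary : Matrix (Fin n) (Fin n) ℂ) with hU
  have hU1 : U * star U = 1 := (Matrix.mem_unitaryGroup_iff).mp hG.eigenvectorUnitary.2
  have hU2 : star U * U = 1 := (Matrix.mem_unitaryGroup_iff').mp hG.eigenvectorUnitary.2
  set φ : Fin n → ℂ := star U *ᵥ ψ with hφ
  have hsφ : star φ = star ψ ᵥ* U := by
    rw [hφ, star_mulVec, star_eq_conjTranspose, conjTranspose_conjTranspose]
  have conj_eq : ∀ d : Fin n → ℂ,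
      star ψ ⬝ᵥ ((U * diagonal d * star U) *ᵥ ψ) = star φ ⬝ᵥ (diagonal d *ᵥ φ) := by
    intro d
    rw [← mulVec_mulVec, ← mulVec_mulVec, dotProduct_mulVec, ← hsφ, hφ]
  have hspec := hG.spectral_theorem
  have e1 : star ψ ⬝ᵥ (G *ᵥ ψ)
      = star φ ⬝ᵥ (diagonal (fun i => (hG.eigenvalues i : ℂ)) *ᵥ φ) := by
    conv_lhs => rw [hspec]
    exact conj_eq _
  have hG2 : G ^ 2 = U * diagonal (fun i => ((hG.eigenvalues i ^ 2 : ℝ) : ℂ)) * star U := by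
    rw [pow_two]
    conv_lhs => rw [hspec, Unitary.conjStarAlgAut_apply]
    rw [Matrix.mul_assoc, Matrix.mul_assoc, ← Matrix.mul_assoc (star U),
      ← Matrix.mul_assoc (star U), hU2, Matrix.one_mul,
      ← Matrix.mul_assoc, ← Matrix.mul_assoc, Matrix.mul_assoc U,
      diagonal_mul_diagonal]
    have hd : (fun i => (RCLike.ofReal ∘ hG.eigenvalues) i * (RCLike.ofReal ∘ hG.eigenvalues) i)
        = fun i => ((hG.eigenvalues i ^ 2 : ℝ) : ℂ) := by
      funext i; simp [Function.comp]; ring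
    rw [hd]
  have e2 : star ψ ⬝ᵥ ((G ^ 2) *ᵥ ψ)
      = star φ ⬝ᵥ (diagonal (fun i => ((hG.eigenvalues i ^ 2 : ℝ) : ℂ)) *ᵥ φ) := by
    rw [hG2]; exact conj_eq _
  have hnorm : star φ ⬝ᵥ φ = 1 := by
    rw [hsφ, hφ, ← dotProduct_mulVec, mulVec_mulVec, hU1, one_mulVec, hψ]
  set p : Fin n → ℝ := fun i => ‖φ i‖ ^ 2 with hp
  have hsum : ∑ i, p i = 1 := by
    have h := diag_expect (fun _ => (1 : ℝ)) φ
    simp only [Complex.ofReal_one, diagonal_one, one_mulVec, one_mul] at h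
    rw [hp, ← h, hnorm]
    simp
  have hA : (star ψ ⬝ᵥ ((G ^ 2) *ᵥ ψ)).re = ∑ i, hG.eigenvalues i ^ 2 * p i := by
    rw [e2, diag_expect]
  have hB : (star ψ ⬝ᵥ (G *ᵥ ψ)).re = ∑ i, hG.eigenvalues i * p i := by
    rw [e1, diag_expect]
  rw [hA, hB]
  set m : ℝ := ∑ i, hG.eigenvalues i * p i with hm
  have hpnn : ∀ i, 0 ≤ p i := fun i => by positivity
  have h1 : ∑ i, hG.eigenvalues i ^ 2 * p i ≤ (lmin + lmax) * m - lmin * lmax := by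
    have : ∀ i ∈ Finset.univ, hG.eigenvalues i ^ 2 * p i
        ≤ ((lmin + lmax) * hG.eigenvalues i - lmin * lmax) * p i := by
      intro i _
      have := mul_nonneg (mul_nonneg (sub_nonneg.2 (hmin i)) (sub_nonneg.2 (hmax i))) (hpnn i)
      nlinarith
    calc ∑ i, hG.eigenvalues i ^ 2 * p i
        ≤ ∑ i, ((lmin + lmax) * hG.eigenvalues i - lmin * lmax) * p i :=
          Finset.sum_le_sum this
      _ = (lmin + lmax) * (∑ i, hG.eigenvalues i * p i) - lmin * lmax * (∑ i, p i) := by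
          rw [Finset.mul_sum, Finset.mul_sum, ← Finset.sum_sub_distrib]
          exact Finset.sum_congr rfl fun i _ => by ring
      _ = (lmin + lmax) * m - lmin * lmax := by rw [hsum, ← hm]; ring
  have hml : lmin ≤ m := by
    rw [hm, ← mul_one lmin, ← hsum, Finset.mul_sum]
    exact Finset.sum_le_sum fun i _ => mul_le_mul_of_nonneg_right (hmin i) (hpnn i)
  have hmu : m ≤ lmax := by
    rw [hm, ← mul_one lmax, ← hsum, Finset.mul_sum]
    exact Finset.sum_le_sum fun i _ => mul_le_mul_of_nonneg_right (hmax i) (hpnn i)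
  nlinarith [sq_nonneg (2 * m - lmin - lmax), h1, hml, hmu]


/-- the maximum of four times the variance `4(⟨ψ,G²ψ⟩ − ⟨ψ,Gψ⟩²)` over
unit vectors `ψ` equals `(λmax − λmin)²`, attained at `ψ = (u + v)/√2` for orthonormal
eigenvectors `u, v` of the extremal eigenvalues. -/
theorem max_variance_eq_spectral_gap_sq {n : ℕ}
    (G : Matrix (Fin n) (Fin n) ℂ) (hG : G.IsHermitian)
    (lmax lmin : ℝ)
    (hmax : IsGreatest (Set.range hG.eigenvalues) lmax)
    (hmin : IsLeast (Set.range hG.eigenvalues) lmin)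
    (u v : Fin n → ℂ)
    (hu : G *ᵥ u = (lmax : ℂ) • u) (hv : G *ᵥ v = (lmin : ℂ) • v)
    (hun : star u ⬝ᵥ u = 1) (hvn : star v ⬝ᵥ v = 1) (huv : star u ⬝ᵥ v = 0) :
    IsGreatest
      { x : ℝ | ∃ ψ : Fin n → ℂ, star ψ ⬝ᵥ ψ = 1 ∧
          x = 4 * ((star ψ ⬝ᵥ ((G ^ 2) *ᵥ ψ)).re - ((star ψ ⬝ᵥ (G *ᵥ ψ)).re) ^ 2) }
      ((lmax - lmin) ^ 2) ∧
    (4 * ((star (((Real.sqrt 2 : ℂ))⁻¹ • (u + v)) ⬝ᵥ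
            ((G ^ 2) *ᵥ (((Real.sqrt 2 : ℂ))⁻¹ • (u + v)))).re -
          ((star (((Real.sqrt 2 : ℂ))⁻¹ • (u + v)) ⬝ᵥ
            (G *ᵥ (((Real.sqrt 2 : ℂ))⁻¹ • (u + v)))).re) ^ 2) =
        (lmax - lmin) ^ 2) := by
  have hvu : star v ⬝ᵥ u = 0 := by rw [star_dotProduct, huv, star_zero]
  have hGu2 : (G ^ 2) *ᵥ u = ((lmax ^ 2 : ℝ) : ℂ) • u := by
    rw [pow_two, ← mulVec_mulVec, hu, mulVec_smul, hu, smul_smul]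
    congr 1; push_cast; ring
  have hGv2 : (G ^ 2) *ᵥ v = ((lmin ^ 2 : ℝ) : ℂ) • v := by
    rw [pow_two, ← mulVec_mulVec, hv, mulVec_smul, hv, smul_smul]
    congr 1; push_cast; ring
  have h1 := combo_expect G lmax lmin u v hu hv hun hvn huv hvu
  have h2 := combo_expect (G ^ 2) (lmax ^ 2) (lmin ^ 2) u v hGu2 hGv2 hun hvn huv hvu
  have h3 := combo_expect (1 : Matrix (Fin n) (Fin n) ℂ) 1 1 u v
    (by simp) (by simp) hun hvn huv hvu
  rw [one_mulVec] at h3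
  have h3' : star (((Real.sqrt 2 : ℂ))⁻¹ • (u + v)) ⬝ᵥ (((Real.sqrt 2 : ℂ))⁻¹ • (u + v)) = 1 := by
    rw [h3]; norm_num
  have hval : 4 * ((star (((Real.sqrt 2 : ℂ))⁻¹ • (u + v)) ⬝ᵥ
            ((G ^ 2) *ᵥ (((Real.sqrt 2 : ℂ))⁻¹ • (u + v)))).re -
          ((star (((Real.sqrt 2 : ℂ))⁻¹ • (u + v)) ⬝ᵥ
            (G *ᵥ (((Real.sqrt 2 : ℂ))⁻¹ • (u + v)))).re) ^ 2) = (lmax - lmin) ^ 2 := by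
    rw [h1, h2, Complex.ofReal_re, Complex.ofReal_re]; ring
  refine ⟨⟨⟨((Real.sqrt 2 : ℂ))⁻¹ • (u + v), h3', hval.symm⟩, ?_⟩, hval⟩
  rintro x ⟨ψ, hψ, rfl⟩
  exact upper_bound G hG lmax lmin (fun i => hmax.2 ⟨i, rfl⟩) (fun i => hmin.2 ⟨i, rfl⟩) ψ hψ

end
end
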